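/- arXiv:1206.3637 — 5 statements merged into one kernel-verified Lean document; each statement's English description precedes it below -/
import Mathlib

section
/- Let α ∈ (0,1/2), 0 ≤ a < b, and let g : [a,b] → ℝ be continuous with Λ := ‖g‖_{0;[a,b]} < ∞, and let f : [a,b] → ℝ be measurable with ∫_a^b ( |f(s)|(s−a)^{−α} + ∫_a^s |f(s)−f(u)|(s−u)^{−1−α} du ) ds < ∞. Then the generalized (fractional) Lebesgue–Stieltjes integral ∫_a^b f dg is well defined and there is a constant C depending only on α such that |∫_a^b f(s) dg(s)| ≤ C · Λ · ∫_a^b ( |f(s)|(s−a)^{−α} + ∫_a^s |f(s)−f(u)|(s−u)^{−1−α} du ) ds. -/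
open MeasureTheory Set
open scoped ENNReal

/-- The seminorm `‖g‖_{0;[a,b]}`, valued in `ℝ≥0∞`. -/
noncomputable def zeroNorm (α a b : ℝ) (g : ℝ → ℝ) : ℝ≥0∞ :=
  ⨆ (u : ℝ) (v : ℝ) (_ : a ≤ u) (_ : u < v) (_ : v < b),
    ENNReal.ofReal (|g v - g u| / (v - u) ^ (1 - α)
      + ∫ z in Ioo u v, |g u - g z| / (z - u) ^ (2 - α))

/-- Left-sided fractional derivative `(D^α_{a+} f)(x)`. -/
noncomputable def fracDerivP (α a : ℝ) (f : ℝ → ℝ) (x : ℝ) : ℝ :=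
  (1 / Real.Gamma (1 - α)) *
    (f x / (x - a) ^ α + α * ∫ u in Ioo a x, (f x - f u) / (x - u) ^ (1 + α))

/-- Right-sided fractional derivative `(D^{1-α}_{b-} g_{b-})(x)`. -/
noncomputable def fracDerivM (α b : ℝ) (g : ℝ → ℝ) (x : ℝ) : ℝ :=
  (1 / Real.Gamma α) *
    ((g x - g b) / (b - x) ^ (1 - α) + (1 - α) * ∫ u in Ioo x b, (g x - g u) / (u - x) ^ (2 - α))

/-- Generalized (fractional) Lebesgue–Stieltjes integral `∫_a^b f dg`. -/
noncomputable def glsIntegral (α a b : ℝ) (f g : ℝ → ℝ) : ℝ :=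
  ∫ x in Ioo a b, fracDerivP α a f x * fracDerivM α b g x

theorem gls_integral_bound (α : ℝ) (hα : α ∈ Set.Ioo (0 : ℝ) (1 / 2)) :
    ∃ C : ℝ, 0 < C ∧ ∀ (a b : ℝ) (f g : ℝ → ℝ),
      0 ≤ a → a < b →
      ContinuousOn g (Set.Icc a b) →
      zeroNorm α a b g < ⊤ →
      Measurable f →
      (∫⁻ s in Ioo a b,
          (ENNReal.ofReal (|f s| * (s - a) ^ (-α))
            + ∫⁻ u in Ioo a s, ENNReal.ofReal (|f s - f u| * (s - u) ^ (-1 - α)))) < ⊤ →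
      IntegrableOn (fun x => fracDerivP α a f x * fracDerivM α b g x) (Ioo a b) ∧
        |glsIntegral α a b f g| ≤
          C * (zeroNorm α a b g).toReal *
            (∫⁻ s in Ioo a b,
              (ENNReal.ofReal (|f s| * (s - a) ^ (-α))
                + ∫⁻ u in Ioo a s,
                    ENNReal.ofReal (|f s - f u| * (s - u) ^ (-1 - α)))).toReal := by
  obtain ⟨hα0, hα2⟩ := hα
  have hα1 : α < 1 := by linarith
  set c1 : ℝ := 1 / Real.Gamma (1 - α) with hc1def
  set c2 : ℝ := 1 / Real.Gamma α with hc2def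
  have hΓ1 : 0 < Real.Gamma (1 - α) := Real.Gamma_pos_of_pos (by linarith)
  have hΓ2 : 0 < Real.Gamma α := Real.Gamma_pos_of_pos hα0
  have hc1 : 0 < c1 := by positivity
  have hc2 : 0 < c2 := by positivity
  refine ⟨2 * c2 * c1, by positivity, ?_⟩
  intro a b f g ha hab hg hzn hf hF
  set Λ : ℝ := (zeroNorm α a b g).toReal with hΛdef
  have hΛ0 : 0 ≤ Λ := ENNReal.toReal_nonneg
  -- base estimate from the seminorm
  have intnn : ∀ u v : ℝ, 0 ≤ ∫ z in Ioo u v, |g u - g z| / (z - u) ^ (2 - α) := by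
    intro u v
    refine setIntegral_nonneg measurableSet_Ioo fun z hz => ?_
    exact div_nonneg (abs_nonneg _) (Real.rpow_nonneg (by linarith [hz.1]) _)
  have base : ∀ u v : ℝ, a ≤ u → u < v → v < b →
      |g v - g u| / (v - u) ^ (1 - α)
        + (∫ z in Ioo u v, |g u - g z| / (z - u) ^ (2 - α)) ≤ Λ := by
    intro u v hu huv hvb
    have h1 : 0 ≤ |g v - g u| / (v - u) ^ (1 - α) :=
      div_nonneg (abs_nonneg _) (Real.rpow_nonneg (by linarith) _)
    have hle : ENNReal.ofReal (|g v - g u| / (v - u) ^ (1 - α)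
        + ∫ z in Ioo u v, |g u - g z| / (z - u) ^ (2 - α)) ≤ zeroNorm α a b g := by
      rw [zeroNorm]
      exact le_iSup_of_le u <| le_iSup_of_le v <| le_iSup_of_le hu <| le_iSup_of_le huv <|
        le_iSup_of_le hvb le_rfl
    calc |g v - g u| / (v - u) ^ (1 - α) + ∫ z in Ioo u v, |g u - g z| / (z - u) ^ (2 - α)
        = (ENNReal.ofReal (|g v - g u| / (v - u) ^ (1 - α)
            + ∫ z in Ioo u v, |g u - g z| / (z - u) ^ (2 - α))).toReal :=
          (ENNReal.toReal_ofReal (by linarith [intnn u v])).symm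
      _ ≤ Λ := ENNReal.toReal_mono hzn.ne hle
  have holder : ∀ u v : ℝ, a ≤ u → u < v → v < b → |g v - g u| ≤ Λ * (v - u) ^ (1 - α) := by
    intro u v hu huv hvb
    have hpos : 0 < (v - u) ^ (1 - α) := Real.rpow_pos_of_pos (by linarith) _
    have hdiv : |g v - g u| / (v - u) ^ (1 - α) ≤ Λ := by linarith [base u v hu huv hvb, intnn u v]
    calc |g v - g u| = |g v - g u| / (v - u) ^ (1 - α) * (v - u) ^ (1 - α) := by
          field_simp
      _ ≤ Λ * (v - u) ^ (1 - α) := mul_le_mul_of_nonneg_right hdiv hpos.le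
  -- Hölder bound up to the endpoint b
  have holderb : ∀ x : ℝ, a ≤ x → x < b → |g x - g b| ≤ Λ * (b - x) ^ (1 - α) := by
    intro x hax hxb
    have hne : (nhdsWithin b (Ioo x b)).NeBot := by
      rw [← mem_closure_iff_nhdsWithin_neBot, closure_Ioo (ne_of_lt hxb)]
      exact ⟨hxb.le, le_refl b⟩
    have hsub : Ioo x b ⊆ Icc a b := fun z hz => ⟨le_trans hax hz.1.le, hz.2.le⟩
    have hgt : Filter.Tendsto (fun v => |g v - g x|) (nhdsWithin b (Ioo x b)) (nhds |g b - g x|) := by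
      have hgb : Filter.Tendsto g (nhdsWithin b (Ioo x b)) (nhds (g b)) :=
        (hg b ⟨hab.le, le_rfl⟩).mono_left (nhdsWithin_mono b hsub)
      exact (hgb.sub_const (g x)).abs
    have hrt : Filter.Tendsto (fun v => Λ * (v - x) ^ (1 - α)) (nhdsWithin b (Ioo x b))
        (nhds (Λ * (b - x) ^ (1 - α))) := by
      have hca : ContinuousAt (fun v : ℝ => Λ * (v - x) ^ (1 - α)) b := by
        have h1 : ContinuousAt (fun v : ℝ => v - x) b := (continuous_sub_right x).continuousAt
        exact (h1.rpow_const (Or.inr (by linarith))).const_mul Λ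
      exact hca.continuousWithinAt.tendsto
    have hev : (fun v => |g v - g x|) ≤ᶠ[nhdsWithin b (Ioo x b)] fun v => Λ * (v - x) ^ (1 - α) :=
      Filter.eventually_iff_exists_mem.2 ⟨Ioo x b, self_mem_nhdsWithin,
        fun v hv => holder x v hax hv.1 hv.2⟩
    have := le_of_tendsto_of_tendsto hgt hrt hev
    rwa [abs_sub_comm] at this
  -- bound on the tail integral of g
  have intb : ∀ x : ℝ, a ≤ x → x < b →
      |∫ u in Ioo x b, (g x - g u) / (u - x) ^ (2 - α)| ≤ Λ := by
    intro x hax hxb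
    by_cases hint : IntegrableOn (fun u => (g x - g u) / (u - x) ^ (2 - α)) (Ioo x b) volume
    · set s : ℕ → Set ℝ := fun n => Ioo x (b - (b - x) / (n + 1)) with hs
      have hbx : 0 < b - x := by linarith
      have hsm : ∀ n, MeasurableSet (s n) := fun n => measurableSet_Ioo
      have hmono : Monotone s := by
        intro n m hnm
        apply Ioo_subset_Ioo le_rfl
        have h1 : (b - x) / (m + 1) ≤ (b - x) / (n + 1) := by
          apply div_le_div_of_nonneg_left hbx.le (by positivity)
          exact_mod_cast by exact_mod_cast add_le_add_left (Nat.cast_le.2 hnm) 1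
        linarith
      have hunion : (⋃ n, s n) = Ioo x b := by
        ext u
        simp only [mem_iUnion, mem_Ioo, hs]
        constructor
        · rintro ⟨n, h1, h2⟩
          refine ⟨h1, lt_of_lt_of_le h2 ?_⟩
          have : 0 < (b - x) / ((n : ℝ) + 1) := by positivity
          linarith
        · rintro ⟨h1, h2⟩
          obtain ⟨n, hn⟩ := exists_nat_gt ((b - x) / (b - u))
          refine ⟨n, h1, ?_⟩
          have hbu : 0 < b - u := by linarith
          have hlt : (b - x) / ((n : ℝ) + 1) < b - u := by
            rw [div_lt_iff₀ (by positivity)]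
            have h4 : b - x = (b - x) / (b - u) * (b - u) := by field_simp
            nlinarith [hn, hbu]
          linarith
      have hint2 : IntegrableOn (fun u => |(g x - g u) / (u - x) ^ (2 - α)|) (Ioo x b) volume :=
        hint.abs
      have htend := tendsto_setIntegral_of_monotone hsm hmono (by rw [hunion]; exact hint2)
      rw [hunion] at htend
      have hbound : ∀ n, (∫ u in s n, |(g x - g u) / (u - x) ^ (2 - α)|) ≤ Λ := by
        intro n
        by_cases hxn : x < b - (b - x) / (n + 1)
        · have hlt : b - (b - x) / ((n : ℝ) + 1) < b := by
            have : 0 < (b - x) / ((n : ℝ) + 1) := by positivity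
            linarith
          have hcong : (∫ u in s n, |(g x - g u) / (u - x) ^ (2 - α)|)
              = ∫ z in Ioo x (b - (b - x) / (n + 1)), |g x - g z| / (z - x) ^ (2 - α) := by
            refine setIntegral_congr_fun measurableSet_Ioo fun z hz => ?_
            rw [abs_div, abs_of_pos (Real.rpow_pos_of_pos (by linarith [hz.1]) _)]
          rw [hcong]
          have hb := base x _ hax hxn hlt
          have h1 : 0 ≤ |g (b - (b - x) / (n + 1)) - g x| / ((b - (b - x) / (n + 1)) - x) ^ (1 - α) :=
            div_nonneg (abs_nonneg _) (Real.rpow_nonneg (by linarith) _)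
          linarith
        · have hemp : s n = ∅ := Ioo_eq_empty hxn
          rw [hemp]
          simpa using hΛ0
      have hlim : (∫ u in Ioo x b, |(g x - g u) / (u - x) ^ (2 - α)|) ≤ Λ :=
        le_of_tendsto htend (Filter.Eventually.of_forall hbound)
      calc |∫ u in Ioo x b, (g x - g u) / (u - x) ^ (2 - α)|
          ≤ ∫ u in Ioo x b, |(g x - g u) / (u - x) ^ (2 - α)| := by
            simpa only [Real.norm_eq_abs] using
              norm_integral_le_integral_norm (μ := volume.restrict (Ioo x b))
                (fun u => (g x - g u) / (u - x) ^ (2 - α))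
        _ ≤ Λ := hlim
    · rw [integral_undef hint]
      simpa using hΛ0
  -- bound on the right fractional derivative
  have Mbound : ∀ x ∈ Ioo a b, |fracDerivM α b g x| ≤ 2 * c2 * Λ := by
    intro x hx
    have hb1 := holderb x hx.1.le hx.2
    have hb2 := intb x hx.1.le hx.2
    have hpos : 0 < (b - x) ^ (1 - α) := Real.rpow_pos_of_pos (by linarith [hx.2]) _
    have h1 : |g x - g b| / (b - x) ^ (1 - α) ≤ Λ := by
      rw [div_le_iff₀ hpos]
      exact hb1
    set J : ℝ := ∫ u in Ioo x b, (g x - g u) / (u - x) ^ (2 - α) with hJ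
    have h2 : (1 - α) * |J| ≤ Λ := by nlinarith [abs_nonneg J]
    have habs : |(g x - g b) / (b - x) ^ (1 - α) + (1 - α) * J| ≤ 2 * Λ := by
      calc |(g x - g b) / (b - x) ^ (1 - α) + (1 - α) * J|
          ≤ |(g x - g b) / (b - x) ^ (1 - α)| + |(1 - α) * J| := abs_add_le _ _
        _ = |g x - g b| / (b - x) ^ (1 - α) + (1 - α) * |J| := by
            rw [abs_div, abs_of_pos hpos, abs_mul, abs_of_pos (by linarith : (0:ℝ) < 1 - α)]
        _ ≤ 2 * Λ := by linarith
    calc |fracDerivM α b g x|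
        = c2 * |(g x - g b) / (b - x) ^ (1 - α) + (1 - α) * J| := by
          rw [fracDerivM, abs_mul, abs_of_pos hc2]
      _ ≤ c2 * (2 * Λ) := mul_le_mul_of_nonneg_left habs hc2.le
      _ = 2 * c2 * Λ := by ring
  -- the dominating function for f
  set Φ : ℝ → ℝ≥0∞ := fun s => ENNReal.ofReal (|f s| * (s - a) ^ (-α))
      + ∫⁻ u in Ioo a s, ENNReal.ofReal (|f s - f u| * (s - u) ^ (-1 - α)) with hΦdef
  have Pbound : ∀ x ∈ Ioo a b, ENNReal.ofReal |fracDerivP α a f x| ≤ ENNReal.ofReal c1 * Φ x := by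
    intro x hx
    have hxa : 0 < x - a := by linarith [hx.1]
    have hA0 : 0 ≤ |f x| * (x - a) ^ (-α) := by positivity
    have hAeq : |f x / (x - a) ^ α| = |f x| * (x - a) ^ (-α) := by
      rw [abs_div, abs_of_pos (Real.rpow_pos_of_pos hxa _), Real.rpow_neg hxa.le,
        div_eq_mul_inv]
    set I : ℝ := ∫ u in Ioo a x, (f x - f u) / (x - u) ^ (1 + α) with hI
    have hkey : |fracDerivP α a f x| ≤ c1 * (|f x| * (x - a) ^ (-α) + α * |I|) := by
      have habs : |f x / (x - a) ^ α + α * I| ≤ |f x| * (x - a) ^ (-α) + α * |I| := by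
        calc |f x / (x - a) ^ α + α * I| ≤ |f x / (x - a) ^ α| + |α * I| := abs_add_le _ _
          _ = |f x| * (x - a) ^ (-α) + α * |I| := by
              rw [hAeq, abs_mul, abs_of_pos hα0]
      calc |fracDerivP α a f x| = c1 * |f x / (x - a) ^ α + α * I| := by
            rw [fracDerivP, abs_mul, abs_of_pos hc1]
        _ ≤ c1 * (|f x| * (x - a) ^ (-α) + α * |I|) := mul_le_mul_of_nonneg_left habs hc1.le
    by_cases hint : IntegrableOn (fun u => (f x - f u) / (x - u) ^ (1 + α)) (Ioo a x) volume
    · have habsI : |I| ≤ ∫ u in Ioo a x, |(f x - f u) / (x - u) ^ (1 + α)| := by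
        simpa only [Real.norm_eq_abs] using
          norm_integral_le_integral_norm (μ := volume.restrict (Ioo a x))
            (fun u => (f x - f u) / (x - u) ^ (1 + α))
      have heq : ENNReal.ofReal (∫ u in Ioo a x, |(f x - f u) / (x - u) ^ (1 + α)|)
          = ∫⁻ u in Ioo a x, ENNReal.ofReal (|f x - f u| * (x - u) ^ (-1 - α)) := by
        rw [ofReal_integral_eq_lintegral_ofReal hint.abs
          (Filter.Eventually.of_forall fun u => abs_nonneg _)]
        refine setLIntegral_congr_fun measurableSet_Ioo
          (fun u hu => ?_)
        congr 1
        have hxu : 0 < x - u := by linarith [hu.2]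
        rw [abs_div, abs_of_pos (Real.rpow_pos_of_pos hxu _), div_eq_mul_inv,
          ← Real.rpow_neg hxu.le, show -(1 + α) = -1 - α from by ring]
      have hIint : 0 ≤ ∫ u in Ioo a x, |(f x - f u) / (x - u) ^ (1 + α)| :=
        setIntegral_nonneg measurableSet_Ioo fun u _ => abs_nonneg _
      calc ENNReal.ofReal |fracDerivP α a f x|
          ≤ ENNReal.ofReal (c1 * (|f x| * (x - a) ^ (-α) + α * |I|)) :=
            ENNReal.ofReal_le_ofReal hkey
        _ = ENNReal.ofReal c1 * (ENNReal.ofReal (|f x| * (x - a) ^ (-α))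
              + ENNReal.ofReal (α * |I|)) := by
            rw [ENNReal.ofReal_mul hc1.le, ENNReal.ofReal_add hA0 (by positivity)]
        _ ≤ ENNReal.ofReal c1 * (ENNReal.ofReal (|f x| * (x - a) ^ (-α))
              + ∫⁻ u in Ioo a x, ENNReal.ofReal (|f x - f u| * (x - u) ^ (-1 - α))) := by
            gcongr
            rw [← heq]
            exact ENNReal.ofReal_le_ofReal (by nlinarith [abs_nonneg I])
        _ = ENNReal.ofReal c1 * Φ x := rfl
    · have hI0 : I = 0 := integral_undef hint
      calc ENNReal.ofReal |fracDerivP α a f x|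
          ≤ ENNReal.ofReal (c1 * (|f x| * (x - a) ^ (-α))) := by
            apply ENNReal.ofReal_le_ofReal
            rw [hI0] at hkey
            simpa using hkey
        _ = ENNReal.ofReal c1 * ENNReal.ofReal (|f x| * (x - a) ^ (-α)) :=
            ENNReal.ofReal_mul hc1.le
        _ ≤ ENNReal.ofReal c1 * Φ x := mul_le_mul_right le_self_add _
  -- measurability of the left fractional derivative
  have hK : Measurable (fun p : ℝ × ℝ =>
      if a < p.2 ∧ p.2 < p.1 then (f p.1 - f p.2) / (p.1 - p.2) ^ (1 + α) else 0) := by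
    refine Measurable.ite ?_ ?_ measurable_const
    · have : {p : ℝ × ℝ | a < p.2 ∧ p.2 < p.1}
          = {p : ℝ × ℝ | a < p.2} ∩ {p : ℝ × ℝ | p.2 < p.1} := rfl
      rw [this]
      exact (measurableSet_lt measurable_const measurable_snd).inter
        (measurableSet_lt measurable_snd measurable_fst)
    · exact ((hf.comp measurable_fst).sub (hf.comp measurable_snd)).div
        ((measurable_fst.sub measurable_snd).pow measurable_const)
  have hJsm : StronglyMeasurable fun x : ℝ =>
      ∫ u, (if a < u ∧ u < x then (f x - f u) / (x - u) ^ (1 + α) else 0) :=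
    hK.stronglyMeasurable.integral_prod_right'
  have hJeq : ∀ x : ℝ, (∫ u in Ioo a x, (f x - f u) / (x - u) ^ (1 + α))
      = ∫ u, (if a < u ∧ u < x then (f x - f u) / (x - u) ^ (1 + α) else 0) := by
    intro x
    rw [← integral_indicator measurableSet_Ioo]
    congr 1
    funext u
    simp [indicator_apply, mem_Ioo]
  have hPm : Measurable (fracDerivP α a f) := by
    have hrw : fracDerivP α a f = fun x => (1 / Real.Gamma (1 - α)) *
        (f x / (x - a) ^ α
          + α * ∫ u, (if a < u ∧ u < x then (f x - f u) / (x - u) ^ (1 + α) else 0)) := by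
      funext x
      rw [fracDerivP, hJeq x]
    rw [hrw]
    exact measurable_const.mul
      ((hf.div ((measurable_id.sub measurable_const).pow measurable_const)).add
        (measurable_const.mul hJsm.measurable))
  -- measurability of the right fractional derivative (via a continuous extension of g)
  have hπc : Continuous fun t : ℝ => max a (min t b) :=
    continuous_const.max (continuous_id.min continuous_const)
  have hπmem : ∀ t : ℝ, max a (min t b) ∈ Icc a b :=
    fun t => ⟨le_max_left _ _, max_le hab.le (min_le_right _ _)⟩
  have hg'c : Continuous (g ∘ fun t : ℝ => max a (min t b)) :=
    hg.comp_continuous hπc hπmem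
  set g' : ℝ → ℝ := g ∘ (fun t : ℝ => max a (min t b)) with hg'def
  have hg'eq : ∀ t ∈ Icc a b, g' t = g t := by
    intro t ht
    have hπ : max a (min t b) = t := by rw [min_eq_left ht.2, max_eq_right ht.1]
    simp only [hg'def, Function.comp_apply, hπ]
  have hK2 : Measurable (fun p : ℝ × ℝ =>
      if p.1 < p.2 ∧ p.2 < b then (g' p.1 - g' p.2) / (p.2 - p.1) ^ (2 - α) else 0) := by
    refine Measurable.ite ?_ ?_ measurable_const
    · have : {p : ℝ × ℝ | p.1 < p.2 ∧ p.2 < b}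
          = {p : ℝ × ℝ | p.1 < p.2} ∩ {p : ℝ × ℝ | p.2 < b} := rfl
      rw [this]
      exact (measurableSet_lt measurable_fst measurable_snd).inter
        (measurableSet_lt measurable_snd measurable_const)
    · exact ((hg'c.measurable.comp measurable_fst).sub
          (hg'c.measurable.comp measurable_snd)).div
        ((measurable_snd.sub measurable_fst).pow measurable_const)
  have hJ2sm : StronglyMeasurable fun x : ℝ =>
      ∫ u, (if x < u ∧ u < b then (g' x - g' u) / (u - x) ^ (2 - α) else 0) :=
    hK2.stronglyMeasurable.integral_prod_right'
  have hMeq : ∀ x ∈ Ioo a b, fracDerivM α b g x = (1 / Real.Gamma α) *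
      ((g' x - g' b) / (b - x) ^ (1 - α)
        + (1 - α) * ∫ u, (if x < u ∧ u < b then (g' x - g' u) / (u - x) ^ (2 - α) else 0)) := by
    intro x hx
    have hxI : x ∈ Icc a b := ⟨hx.1.le, hx.2.le⟩
    have hbI : b ∈ Icc a b := ⟨hab.le, le_rfl⟩
    have hint : (∫ u in Ioo x b, (g x - g u) / (u - x) ^ (2 - α))
        = ∫ u, (if x < u ∧ u < b then (g' x - g' u) / (u - x) ^ (2 - α) else 0) := by
      rw [← integral_indicator measurableSet_Ioo]
      refine integral_congr_ae (Filter.Eventually.of_forall fun u => ?_)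
      simp only [indicator_apply, mem_Ioo]
      by_cases hu : x < u ∧ u < b
      · rw [if_pos hu, if_pos hu, hg'eq x hxI, hg'eq u ⟨(hx.1.trans hu.1).le, hu.2.le⟩]
      · rw [if_neg hu, if_neg hu]
    rw [fracDerivM, hint, hg'eq x hxI, hg'eq b hbI]
  have hMaesm : AEStronglyMeasurable (fracDerivM α b g) (volume.restrict (Ioo a b)) := by
    have hm : Measurable fun x : ℝ => (1 / Real.Gamma α) *
        ((g' x - g' b) / (b - x) ^ (1 - α)
          + (1 - α) * ∫ u, (if x < u ∧ u < b then (g' x - g' u) / (u - x) ^ (2 - α) else 0)) :=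
      measurable_const.mul
        (((hg'c.measurable.sub measurable_const).div
            ((measurable_const.sub measurable_id).pow measurable_const)).add
          (measurable_const.mul hJ2sm.measurable))
    refine hm.aestronglyMeasurable.congr ?_
    rw [Filter.EventuallyEq, ae_restrict_iff' measurableSet_Ioo]
    exact Filter.Eventually.of_forall fun x hx => (hMeq x hx).symm
  have haesm : AEStronglyMeasurable (fun x => fracDerivP α a f x * fracDerivM α b g x)
      (volume.restrict (Ioo a b)) :=
    hPm.aestronglyMeasurable.mul hMaesm
  -- the pointwise bound on the product
  have hptwise : ∀ x ∈ Ioo a b,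
      ENNReal.ofReal ‖fracDerivP α a f x * fracDerivM α b g x‖
        ≤ ENNReal.ofReal (2 * c2 * Λ * c1) * Φ x := by
    intro x hx
    rw [Real.norm_eq_abs, abs_mul]
    calc ENNReal.ofReal (|fracDerivP α a f x| * |fracDerivM α b g x|)
        ≤ ENNReal.ofReal (|fracDerivP α a f x| * (2 * c2 * Λ)) :=
          ENNReal.ofReal_le_ofReal (mul_le_mul_of_nonneg_left (Mbound x hx) (abs_nonneg _))
      _ = ENNReal.ofReal (2 * c2 * Λ) * ENNReal.ofReal |fracDerivP α a f x| := by
          rw [mul_comm, ENNReal.ofReal_mul (by positivity)]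
      _ ≤ ENNReal.ofReal (2 * c2 * Λ) * (ENNReal.ofReal c1 * Φ x) :=
          mul_le_mul_right (Pbound x hx) _
      _ = ENNReal.ofReal (2 * c2 * Λ * c1) * Φ x := by
          rw [← mul_assoc, ← ENNReal.ofReal_mul (by positivity)]
  have hlin : (∫⁻ x in Ioo a b, ENNReal.ofReal ‖fracDerivP α a f x * fracDerivM α b g x‖)
      ≤ ENNReal.ofReal (2 * c2 * Λ * c1) * ∫⁻ s in Ioo a b, Φ s := by
    rw [← lintegral_const_mul' _ _ ENNReal.ofReal_ne_top]
    refine lintegral_mono_ae ?_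
    rw [ae_restrict_iff' measurableSet_Ioo]
    exact Filter.Eventually.of_forall hptwise
  have hfin : HasFiniteIntegral (fun x => fracDerivP α a f x * fracDerivM α b g x)
      (volume.restrict (Ioo a b)) := by
    rw [hasFiniteIntegral_iff_norm]
    exact lt_of_le_of_lt hlin (ENNReal.mul_lt_top ENNReal.ofReal_lt_top hF)
  refine ⟨⟨haesm, hfin⟩, ?_⟩
  have hnorm : |glsIntegral α a b f g|
      ≤ (∫⁻ x in Ioo a b, ENNReal.ofReal ‖fracDerivP α a f x * fracDerivM α b g x‖).toReal := by
    rw [glsIntegral]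
    simpa only [Real.norm_eq_abs] using
      norm_integral_le_lintegral_norm (μ := volume.restrict (Ioo a b))
        (fun x => fracDerivP α a f x * fracDerivM α b g x)
  calc |glsIntegral α a b f g|
      ≤ (∫⁻ x in Ioo a b, ENNReal.ofReal ‖fracDerivP α a f x * fracDerivM α b g x‖).toReal :=
        hnorm
    _ ≤ (ENNReal.ofReal (2 * c2 * Λ * c1) * ∫⁻ s in Ioo a b, Φ s).toReal :=
        ENNReal.toReal_mono (ENNReal.mul_ne_top ENNReal.ofReal_ne_top hF.ne) hlin
    _ = 2 * c2 * Λ * c1 * (∫⁻ s in Ioo a b, Φ s).toReal := by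
        rw [ENNReal.toReal_mul, ENNReal.toReal_ofReal (by positivity)]
    _ = 2 * c2 * c1 * Λ * (∫⁻ s in Ioo a b, Φ s).toReal := by ring
end

section
/- Let α ∈ (0,1/2), λ ∈ (1−α, 1], 0 ≤ a < b, and let g : [a,b] → ℝ satisfy |g(v) − g(u)| ≤ L (v−u)^λ for all a ≤ u ≤ v ≤ b. Then ‖g‖_{0;[a,b]} ≤ (1 + 1/(λ+α−1)) · L · (b−a)^{λ+α−1}. In particular, every Hölder continuous function of order λ > 1−α on [a,b] has ‖g‖_{0;[a,b]} < ∞. -/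
open MeasureTheory Set
open scoped ENNReal

theorem zeroNorm_le_of_holder (α lam L a b : ℝ) (g : ℝ → ℝ)
    (hα : α ∈ Set.Ioo (0 : ℝ) (1 / 2)) (hlam : lam ∈ Set.Ioc (1 - α) 1)
    (ha : 0 ≤ a) (hab : a < b)
    (hg : ∀ u v : ℝ, a ≤ u → u ≤ v → v ≤ b → |g v - g u| ≤ L * (v - u) ^ lam) :
    zeroNorm α a b g ≤
      ENNReal.ofReal ((1 + 1 / (lam + α - 1)) * L * (b - a) ^ (lam + α - 1)) := by
  obtain ⟨hα0, hα2⟩ := hα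
  obtain ⟨hlam1, hlam2⟩ := hlam
  set E : ℝ := lam + α - 1 with hEdef
  have hE : 0 < E := by simp only [hEdef]; linarith
  have hba : 0 < b - a := sub_pos.mpr hab
  have hL : 0 ≤ L := by
    have h1 := (abs_nonneg (g b - g a)).trans (hg a b le_rfl hab.le le_rfl)
    have h2 : 0 < (b - a) ^ lam := Real.rpow_pos_of_pos hba lam
    nlinarith
  have hbaE : 0 < (b - a) ^ E := Real.rpow_pos_of_pos hba E
  rw [zeroNorm]
  refine iSup_le fun u => iSup_le fun v => iSup_le fun hau => iSup_le fun huv =>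
    iSup_le fun hvb => ENNReal.ofReal_le_ofReal ?_
  have hvu : 0 < v - u := sub_pos.mpr huv
  have hvuba : v - u ≤ b - a := by linarith
  have hrpow_le : (v - u) ^ E ≤ (b - a) ^ E := Real.rpow_le_rpow hvu.le hvuba hE.le
  -- first term
  have hterm1 : |g v - g u| / (v - u) ^ (1 - α) ≤ L * (b - a) ^ E := by
    rw [div_le_iff₀ (Real.rpow_pos_of_pos hvu (1 - α))]
    have hexp : E + (1 - α) = lam := by rw [hEdef]; ring
    calc |g v - g u| ≤ L * (v - u) ^ lam := hg u v hau huv.le hvb.le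
      _ = L * (v - u) ^ E * (v - u) ^ (1 - α) := by
          rw [mul_assoc, ← Real.rpow_add hvu, hexp]
      _ ≤ L * (b - a) ^ E * (v - u) ^ (1 - α) := by
          gcongr
  -- integral term
  have hdom : IntegrableOn (fun z => L * (z - u) ^ (E - 1)) (Ioo u v) := by
    have h1 : IntervalIntegrable (fun x : ℝ => x ^ (E - 1)) volume (u - u) (v - u) :=
      intervalIntegral.intervalIntegrable_rpow' (by linarith)
    have h2 := (h1.comp_sub_right u).const_mul L
    rw [sub_add_cancel, sub_add_cancel] at h2
    exact (h2.1).mono_set Ioo_subset_Ioc_self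
  have hcalc : (∫ z in Ioo u v, L * (z - u) ^ (E - 1)) = L * ((v - u) ^ E / E) := by
    rw [← integral_Ioc_eq_integral_Ioo, ← intervalIntegral.integral_of_le huv.le,
      intervalIntegral.integral_const_mul]
    congr 1
    rw [intervalIntegral.integral_comp_sub_right (fun x => x ^ (E - 1)) u, sub_self,
      integral_rpow (Or.inl (by linarith)), sub_add_cancel,
      Real.zero_rpow hE.ne', sub_zero]
  have hterm2 : (∫ z in Ioo u v, |g u - g z| / (z - u) ^ (2 - α)) ≤ L * (b - a) ^ E / E := by
    have hpt : ∀ z ∈ Ioo u v, |g u - g z| / (z - u) ^ (2 - α) ≤ L * (z - u) ^ (E - 1) := by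
      intro z hz
      have hzu : 0 < z - u := sub_pos.mpr hz.1
      rw [div_le_iff₀ (Real.rpow_pos_of_pos hzu (2 - α))]
      have hexp : E - 1 + (2 - α) = lam := by rw [hEdef]; ring
      calc |g u - g z| = |g z - g u| := abs_sub_comm _ _
        _ ≤ L * (z - u) ^ lam := hg u z hau hz.1.le (by linarith [hz.2])
        _ = L * (z - u) ^ (E - 1) * (z - u) ^ (2 - α) := by
            rw [mul_assoc, ← Real.rpow_add hzu, hexp]
    have hRHS : 0 ≤ L * (b - a) ^ E / E := by positivity
    by_cases hInt : IntegrableOn (fun z => |g u - g z| / (z - u) ^ (2 - α)) (Ioo u v)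
    · calc (∫ z in Ioo u v, |g u - g z| / (z - u) ^ (2 - α))
          ≤ ∫ z in Ioo u v, L * (z - u) ^ (E - 1) :=
            setIntegral_mono_on hInt hdom measurableSet_Ioo hpt
        _ = L * ((v - u) ^ E / E) := hcalc
        _ ≤ L * (b - a) ^ E / E := by
            rw [mul_div_assoc]
            gcongr
    · rw [integral_undef hInt]
      exact hRHS
  calc |g v - g u| / (v - u) ^ (1 - α)
        + (∫ z in Ioo u v, |g u - g z| / (z - u) ^ (2 - α))
      ≤ L * (b - a) ^ E + L * (b - a) ^ E / E := add_le_add hterm1 hterm2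
    _ = (1 + 1 / E) * L * (b - a) ^ E := by field_simp
end

section
/- Let α ∈ (0,1), γ ∈ (α,1], 0 ≤ a < b, and let f : [a,b] → ℝ be piecewise Hölder continuous of order γ, i.e. there exist points a = s_0 < s_1 < … < s_m = b such that f is Hölder continuous of order γ on each interval [s_{i}, s_{i+1}) and f has left limits at each s_i. Then D^α_{a+} f ∈ L^1[a,b], i.e. ∫_a^b ( |f(x)|(x−a)^{−α} + ∫_a^x |f(x) − f(u)| (x−u)^{−1−α} du ) dx < ∞. -/
open MeasureTheory Set
open scoped ENNReal

/-- `f` is piecewise Hölder continuous of order `γ` on `[a,b]`: there is a partition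
`a = s_0 < s_1 < … < s_m = b` such that `f` is Hölder of order `γ` on each `[s_i, s_{i+1})`
and `f` has a left limit at each `s_i`, `i ≥ 1`. -/
def PiecewiseHolder (γ a b : ℝ) (f : ℝ → ℝ) : Prop :=
  ∃ (m : ℕ) (s : ℕ → ℝ), 0 < m ∧ s 0 = a ∧ s m = b ∧
    (∀ i < m, s i < s (i + 1)) ∧
    (∀ i < m, ∃ L : ℝ, ∀ x ∈ Set.Ico (s i) (s (i + 1)), ∀ y ∈ Set.Ico (s i) (s (i + 1)),
      |f x - f y| ≤ L * |x - y| ^ γ) ∧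
    (∀ i, 0 < i → i ≤ m → ∃ l : ℝ,
      Filter.Tendsto f (nhdsWithin (s i) (Set.Iio (s i))) (nhds l))

private lemma lint_reflect (x A B : ℝ) (g : ℝ → ℝ≥0∞) :
    ∫⁻ u in Ioo A B, g (x - u) = ∫⁻ t in Ioo (x - B) (x - A), g t := by
  have hemb : MeasurableEmbedding (fun u : ℝ => x - u) :=
    (MeasurableEquiv.subLeft x).measurableEmbedding
  have h := (Measure.measurePreserving_sub_left (volume : Measure ℝ) x).setLIntegral_comp_emb
    hemb g (Ioo A B)
  rwa [Set.image_const_sub_Ioo] at h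

private lemma lint_shift (c A B : ℝ) (g : ℝ → ℝ≥0∞) :
    ∫⁻ u in Ioo A B, g (u - c) = ∫⁻ t in Ioo (A - c) (B - c), g t := by
  have hemb : MeasurableEmbedding (fun u : ℝ => u - c) :=
    (MeasurableEquiv.subRight c).measurableEmbedding
  have h := (measurePreserving_sub_right (volume : Measure ℝ) c).setLIntegral_comp_emb
    hemb g (Ioo A B)
  rwa [Set.image_sub_const_Ioo] at h

private lemma rpow_lint_finite {r : ℝ} (B : ℝ) (hr : -1 < r) :
    ∫⁻ t in Ioo (0:ℝ) B, ENNReal.ofReal (t ^ r) < ⊤ := by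
  rcases le_or_gt B 0 with hB | hB
  · rw [Set.Ioo_eq_empty (by simpa using hB.not_gt)]
    simp
  · have hi : IntervalIntegrable (fun t : ℝ => t ^ r) volume 0 B :=
      intervalIntegral.intervalIntegrable_rpow' hr
    have h2 : IntegrableOn (fun t : ℝ => t ^ r) (Ioo 0 B) volume :=
      ((intervalIntegrable_iff_integrableOn_Ioc_of_le hB.le).mp hi).mono_set Ioo_subset_Ioc_self
    exact h2.lintegral_lt_top

private lemma rpow_lint_Ioi {α : ℝ} (hα : 0 < α) {A : ℝ} (hA : 0 < A) :
    ∫⁻ t in Ioi A, ENNReal.ofReal (t ^ (-1 - α)) = ENNReal.ofReal (A ^ (-α) / α) := by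
  have hr : (-1 - α) < -1 := by linarith
  have hint : IntegrableOn (fun t : ℝ => t ^ (-1 - α)) (Ioi A) volume :=
    integrableOn_Ioi_rpow_of_lt hr hA
  have hnn : 0 ≤ᵐ[volume.restrict (Ioi A)] fun t : ℝ => t ^ (-1 - α) := by
    filter_upwards [ae_restrict_mem measurableSet_Ioi] with t ht
    exact Real.rpow_nonneg (le_of_lt (hA.trans ht)) _
  rw [← MeasureTheory.ofReal_integral_eq_lintegral_ofReal hint hnn,
    integral_Ioi_rpow_of_lt hr hA]
  congr 1
  rw [show (-1 - α) + 1 = -α by ring, neg_div_neg_eq]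

theorem fracDerivP_L1_of_piecewiseHolder (α γ a b : ℝ) (f : ℝ → ℝ)
    (hα : α ∈ Set.Ioo (0 : ℝ) 1) (hγ : γ ∈ Set.Ioc α 1)
    (ha : 0 ≤ a) (hab : a < b)
    (hf : PiecewiseHolder γ a b f) :
    (∫⁻ x in Ioo a b,
        (ENNReal.ofReal (|f x| * (x - a) ^ (-α))
          + ∫⁻ u in Ioo a x, ENNReal.ofReal (|f x - f u| * (x - u) ^ (-1 - α)))) < ⊤ := by
  obtain ⟨hα0, hα1⟩ := hα
  obtain ⟨hγα, hγ1⟩ := hγ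
  obtain ⟨m, s, hm, hs0, hsm, hadj, hHol, -⟩ := hf
  classical
  -- monotonicity of the partition
  have mono : ∀ j, j ≤ m → ∀ i, i ≤ j → s i ≤ s j := by
    intro j
    induction j with
    | zero => intro _ i hi; rw [Nat.le_zero.mp hi]
    | succ k ih =>
      intro hj i hi
      rcases eq_or_lt_of_le hi with h | h
      · rw [h]
      · exact (ih (by omega) i (by omega)).trans (hadj k (by omega)).le
  have hsa : ∀ i, i ≤ m → a ≤ s i := fun i hi => hs0 ▸ mono i hi 0 (Nat.zero_le i)
  have hsb : ∀ i, i ≤ m → s i ≤ b := fun i hi => hsm ▸ mono m le_rfl i hi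
  -- covering
  have cover : ∀ x ∈ Ico a b, ∃ i, i < m ∧ x ∈ Ico (s i) (s (i + 1)) := by
    intro x hx
    set P := fun j => s j ≤ x with hP
    have hP0 : P 0 := by simpa [hP, hs0] using hx.1
    have hPi : P (Nat.findGreatest P m) := Nat.findGreatest_spec (Nat.zero_le m) hP0
    have him : Nat.findGreatest P m ≤ m := Nat.findGreatest_le m
    have hilt : Nat.findGreatest P m < m := by
      rcases lt_or_eq_of_le him with h | h
      · exact h
      · exfalso
        rw [h] at hPi
        simp only [hP, hsm] at hPi
        exact absurd hx.2 (not_lt.mpr hPi)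
    refine ⟨_, hilt, hPi, ?_⟩
    by_contra hcon
    push_neg at hcon
    exact Nat.findGreatest_is_greatest (Nat.lt_succ_self _) (Nat.succ_le_of_lt hilt) hcon
  -- Hölder constants
  choose! L hL using hHol
  set l : ℕ → ℝ := fun i => max (L i) 0 with hldef
  have hl0 : ∀ i, 0 ≤ l i := fun i => le_max_right _ _
  have hL' : ∀ i, i < m → ∀ x ∈ Ico (s i) (s (i + 1)), ∀ y ∈ Ico (s i) (s (i + 1)),
      |f x - f y| ≤ l i * |x - y| ^ γ := by
    intro i hi x hx y hy
    exact (hL i hi x hx y hy).trans (mul_le_mul_of_nonneg_right (le_max_left _ _)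
      (Real.rpow_nonneg (abs_nonneg _) _))
  -- global bound
  set M : ℝ := ∑ i ∈ Finset.range m, (|f (s i)| + l i * (b - a) ^ γ) with hMdef
  have hγ0 : (0:ℝ) ≤ γ := by linarith
  have hM0 : 0 ≤ M := Finset.sum_nonneg fun i _ => add_nonneg (abs_nonneg _) (mul_nonneg (hl0 i) (Real.rpow_nonneg (by linarith) _))
  have hM : ∀ x ∈ Ico a b, |f x| ≤ M := by
    intro x hx
    obtain ⟨i, hi, hxi⟩ := cover x hx
    have h1 : |f x| ≤ |f (s i)| + |f x - f (s i)| := by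
      calc |f x| = |f (s i) + (f x - f (s i))| := by congr 1; ring
        _ ≤ |f (s i)| + |f x - f (s i)| := abs_add_le _ _
    have hsmem : s i ∈ Ico (s i) (s (i + 1)) := ⟨le_refl _, hadj i hi⟩
    have h2 : |f x - f (s i)| ≤ l i * (b - a) ^ γ := by
      refine (hL' i hi x hxi (s i) hsmem).trans ?_
      refine mul_le_mul_of_nonneg_left ?_ (hl0 i)
      refine Real.rpow_le_rpow (abs_nonneg _) ?_ hγ0
      have h3 : a ≤ s i := hsa i hi.le
      have h4 : x < b := hx.2
      rw [abs_of_nonneg (by linarith [hxi.1] : (0:ℝ) ≤ x - s i)]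
      linarith [hxi.1]
    calc |f x| ≤ |f (s i)| + l i * (b - a) ^ γ := by linarith
      _ ≤ M := Finset.single_le_sum (f := fun j => |f (s j)| + l j * (b - a) ^ γ)
          (fun j _ => add_nonneg (abs_nonneg _) (mul_nonneg (hl0 j) (Real.rpow_nonneg (by linarith) _))) (Finset.mem_range.mpr hi)
  -- constant J
  set J : ℝ≥0∞ := ∫⁻ t in Ioo (0:ℝ) (b - a), ENNReal.ofReal (t ^ (γ + (-1 - α))) with hJ
  have hJfin : J < ⊤ := rpow_lint_finite _ (by linarith)
  set F : ℝ → ℝ≥0∞ := fun x =>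
    ENNReal.ofReal (|f x| * (x - a) ^ (-α))
      + ∫⁻ u in Ioo a x, ENNReal.ofReal (|f x - f u| * (x - u) ^ (-1 - α)) with hFdef
  show (∫⁻ x in Ioo a b, F x) < ⊤
  -- reduce to pieces
  set T : ℕ → Set ℝ := fun i => if i < m then Ico (s i) (s (i + 1)) else ∅ with hT
  have hsub : Ioo a b ⊆ ⋃ i, T i := by
    intro x hx
    obtain ⟨i, hi, hxi⟩ := cover x ⟨hx.1.le, hx.2⟩
    refine Set.mem_iUnion.mpr ⟨i, ?_⟩
    show x ∈ (if i < m then Ico (s i) (s (i + 1)) else ∅)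
    rw [if_pos hi]; exact hxi
  have step1 : (∫⁻ x in Ioo a b, F x)
      ≤ ∑ i ∈ Finset.range m, ∫⁻ x in Ioo (s i) (s (i + 1)), F x := by
    calc ∫⁻ x in Ioo a b, F x ≤ ∫⁻ x in ⋃ i, T i, F x := lintegral_mono_set hsub
      _ ≤ ∑' i, ∫⁻ x in T i, F x := lintegral_iUnion_le _ _
      _ = ∑ i ∈ Finset.range m, ∫⁻ x in T i, F x := by
          refine tsum_eq_sum ?_
          intro i hi
          have : T i = ∅ := if_neg (by simpa using Finset.mem_range.not.mp hi)
          simp [this]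
      _ = ∑ i ∈ Finset.range m, ∫⁻ x in Ioo (s i) (s (i + 1)), F x := by
          refine Finset.sum_congr rfl fun i hi => ?_
          have h1 : T i = Ico (s i) (s (i + 1)) := if_pos (Finset.mem_range.mp hi)
          rw [h1]
          exact (setLIntegral_congr Ioo_ae_eq_Ico).symm
  -- finiteness on each piece
  have piece : ∀ i, i < m → (∫⁻ x in Ioo (s i) (s (i + 1)), F x) < ⊤ := by
    intro i hi
    have hsia : a ≤ s i := hsa i hi.le
    have hsib : s (i + 1) ≤ b := hsb (i + 1) hi
    have hptwise : ∀ x ∈ Ioo (s i) (s (i + 1)),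
        F x ≤ ENNReal.ofReal M * ENNReal.ofReal ((x - a) ^ (-α))
            + (ENNReal.ofReal (2 * M) * ENNReal.ofReal ((x - s i) ^ (-α) / α)
               + ENNReal.ofReal (l i) * J) := by
      intro x hx
      obtain ⟨hx1, hx2⟩ := hx
      have hax : a < x := lt_of_le_of_lt hsia hx1
      have hxb : x < b := lt_of_lt_of_le hx2 hsib
      have hxmem : x ∈ Ico a b := ⟨hax.le, hxb⟩
      refine add_le_add ?_ ?_
      · rw [← ENNReal.ofReal_mul hM0]
        exact ENNReal.ofReal_le_ofReal
          (mul_le_mul_of_nonneg_right (hM x hxmem) (Real.rpow_nonneg (by linarith) _))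
      · have hsplit : Ioo a x ⊆ Ioo a (s i) ∪ Ico (s i) x := by
          intro u hu
          rcases lt_or_ge u (s i) with h | h
          · exact Or.inl ⟨hu.1, h⟩
          · exact Or.inr ⟨h, hu.2⟩
        have hA : (∫⁻ u in Ioo a (s i), ENNReal.ofReal (|f x - f u| * (x - u) ^ (-1 - α)))
            ≤ ENNReal.ofReal (2 * M) * ENNReal.ofReal ((x - s i) ^ (-α) / α) := by
          have hb1 : ∀ u ∈ Ioo a (s i), ENNReal.ofReal (|f x - f u| * (x - u) ^ (-1 - α))
              ≤ ENNReal.ofReal (2 * M) * ENNReal.ofReal ((x - u) ^ (-1 - α)) := by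
            intro u hu
            have hum : u ∈ Ico a b := ⟨hu.1.le, (hu.2.trans_le hx1.le).trans hxb⟩
            rw [← ENNReal.ofReal_mul (by linarith)]
            apply ENNReal.ofReal_le_ofReal
            refine mul_le_mul_of_nonneg_right ?_
              (Real.rpow_nonneg (by linarith [hu.2] : (0:ℝ) ≤ x - u) _)
            calc |f x - f u| ≤ |f x| + |f u| := abs_sub _ _
              _ ≤ M + M := add_le_add (hM x hxmem) (hM u hum)
              _ = 2 * M := by ring
          calc (∫⁻ u in Ioo a (s i), ENNReal.ofReal (|f x - f u| * (x - u) ^ (-1 - α)))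
              ≤ ∫⁻ u in Ioo a (s i),
                  ENNReal.ofReal (2 * M) * ENNReal.ofReal ((x - u) ^ (-1 - α)) :=
                setLIntegral_mono' measurableSet_Ioo hb1
            _ = ENNReal.ofReal (2 * M)
                * ∫⁻ u in Ioo a (s i), ENNReal.ofReal ((x - u) ^ (-1 - α)) :=
                lintegral_const_mul' _ _ ENNReal.ofReal_ne_top
            _ = ENNReal.ofReal (2 * M)
                * ∫⁻ t in Ioo (x - s i) (x - a), ENNReal.ofReal (t ^ (-1 - α)) := by
                rw [lint_reflect x a (s i) (fun t => ENNReal.ofReal (t ^ (-1 - α)))]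
            _ ≤ ENNReal.ofReal (2 * M)
                * ∫⁻ t in Ioi (x - s i), ENNReal.ofReal (t ^ (-1 - α)) :=
                mul_le_mul_right (lintegral_mono_set Ioo_subset_Ioi_self) _
            _ = ENNReal.ofReal (2 * M) * ENNReal.ofReal ((x - s i) ^ (-α) / α) := by
                rw [rpow_lint_Ioi hα0 (by linarith : (0:ℝ) < x - s i)]
        have hB : (∫⁻ u in Ico (s i) x, ENNReal.ofReal (|f x - f u| * (x - u) ^ (-1 - α)))
            ≤ ENNReal.ofReal (l i) * J := by
          have hxmem' : x ∈ Ico (s i) (s (i + 1)) := ⟨hx1.le, hx2⟩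
          have hb1 : ∀ u ∈ Ico (s i) x, ENNReal.ofReal (|f x - f u| * (x - u) ^ (-1 - α))
              ≤ ENNReal.ofReal (l i) * ENNReal.ofReal ((x - u) ^ (γ + (-1 - α))) := by
            intro u hu
            have hux : u < x := hu.2
            have hxu0 : (0:ℝ) < x - u := by linarith
            have humem : u ∈ Ico (s i) (s (i + 1)) := ⟨hu.1, hux.trans hx2⟩
            rw [← ENNReal.ofReal_mul (hl0 i)]
            apply ENNReal.ofReal_le_ofReal
            have h1 : |f x - f u| ≤ l i * (x - u) ^ γ := by
              have h2 := hL' i hi x hxmem' u humem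
              rwa [abs_of_pos hxu0] at h2
            calc |f x - f u| * (x - u) ^ (-1 - α)
                ≤ l i * (x - u) ^ γ * (x - u) ^ (-1 - α) :=
                  mul_le_mul_of_nonneg_right h1 (Real.rpow_nonneg hxu0.le _)
              _ = l i * (x - u) ^ (γ + (-1 - α)) := by
                  rw [mul_assoc, ← Real.rpow_add hxu0]
          calc (∫⁻ u in Ico (s i) x, ENNReal.ofReal (|f x - f u| * (x - u) ^ (-1 - α)))
              ≤ ∫⁻ u in Ico (s i) x,
                  ENNReal.ofReal (l i) * ENNReal.ofReal ((x - u) ^ (γ + (-1 - α))) :=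
                setLIntegral_mono' measurableSet_Ico hb1
            _ = ∫⁻ u in Ioo (s i) x,
                  ENNReal.ofReal (l i) * ENNReal.ofReal ((x - u) ^ (γ + (-1 - α))) :=
                (setLIntegral_congr Ioo_ae_eq_Ico).symm
            _ = ENNReal.ofReal (l i)
                * ∫⁻ u in Ioo (s i) x, ENNReal.ofReal ((x - u) ^ (γ + (-1 - α))) :=
                lintegral_const_mul' _ _ ENNReal.ofReal_ne_top
            _ = ENNReal.ofReal (l i)
                * ∫⁻ t in Ioo (x - x) (x - s i), ENNReal.ofReal (t ^ (γ + (-1 - α))) := by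
                rw [lint_reflect x (s i) x (fun t => ENNReal.ofReal (t ^ (γ + (-1 - α))))]
            _ ≤ ENNReal.ofReal (l i) * J := by
                rw [hJ]
                refine mul_le_mul_right (lintegral_mono_set ?_) _
                rw [sub_self]
                exact Ioo_subset_Ioo le_rfl (by linarith)
        calc (∫⁻ u in Ioo a x, ENNReal.ofReal (|f x - f u| * (x - u) ^ (-1 - α)))
            ≤ ∫⁻ u in Ioo a (s i) ∪ Ico (s i) x,
                ENNReal.ofReal (|f x - f u| * (x - u) ^ (-1 - α)) :=
              lintegral_mono_set hsplit
          _ ≤ (∫⁻ u in Ioo a (s i), ENNReal.ofReal (|f x - f u| * (x - u) ^ (-1 - α)))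
              + ∫⁻ u in Ico (s i) x, ENNReal.ofReal (|f x - f u| * (x - u) ^ (-1 - α)) :=
              lintegral_union_le _ _ _
          _ ≤ ENNReal.ofReal (2 * M) * ENNReal.ofReal ((x - s i) ^ (-α) / α)
              + ENNReal.ofReal (l i) * J := add_le_add hA hB
    have hmeas1 : Measurable fun x : ℝ => ENNReal.ofReal M * ENNReal.ofReal ((x - a) ^ (-α)) :=
      measurable_const.mul ((measurable_id.sub_const a).pow_const (-α)).ennreal_ofReal
    have hmeas2 : Measurable fun x : ℝ =>
        ENNReal.ofReal (2 * M) * ENNReal.ofReal ((x - s i) ^ (-α) / α) :=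
      measurable_const.mul
        (((measurable_id.sub_const (s i)).pow_const (-α)).div_const α).ennreal_ofReal
    have hE1 : (∫⁻ x in Ioo (s i) (s (i + 1)),
        ENNReal.ofReal M * ENNReal.ofReal ((x - a) ^ (-α))) < ⊤ := by
      have : (∫⁻ x in Ioo (s i) (s (i + 1)), ENNReal.ofReal ((x - a) ^ (-α)))
          ≤ ∫⁻ t in Ioo (0:ℝ) (b - a), ENNReal.ofReal (t ^ (-α)) := by
        calc (∫⁻ x in Ioo (s i) (s (i + 1)), ENNReal.ofReal ((x - a) ^ (-α)))
            ≤ ∫⁻ x in Ioo a b, ENNReal.ofReal ((x - a) ^ (-α)) :=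
              lintegral_mono_set (Ioo_subset_Ioo hsia hsib)
          _ = ∫⁻ t in Ioo (a - a) (b - a), ENNReal.ofReal (t ^ (-α)) :=
              lint_shift a a b (fun t => ENNReal.ofReal (t ^ (-α)))
          _ = ∫⁻ t in Ioo (0:ℝ) (b - a), ENNReal.ofReal (t ^ (-α)) := by rw [sub_self]
      calc (∫⁻ x in Ioo (s i) (s (i + 1)), ENNReal.ofReal M * ENNReal.ofReal ((x - a) ^ (-α)))
          = ENNReal.ofReal M * ∫⁻ x in Ioo (s i) (s (i + 1)), ENNReal.ofReal ((x - a) ^ (-α)) :=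
            lintegral_const_mul' _ _ ENNReal.ofReal_ne_top
        _ ≤ ENNReal.ofReal M * ∫⁻ t in Ioo (0:ℝ) (b - a), ENNReal.ofReal (t ^ (-α)) :=
            mul_le_mul_right this _
        _ < ⊤ := ENNReal.mul_lt_top ENNReal.ofReal_lt_top (rpow_lint_finite _ (by linarith))
    have hE2 : (∫⁻ x in Ioo (s i) (s (i + 1)),
        ENNReal.ofReal (2 * M) * ENNReal.ofReal ((x - s i) ^ (-α) / α)) < ⊤ := by
      have hkey : (∫⁻ x in Ioo (s i) (s (i + 1)), ENNReal.ofReal ((x - s i) ^ (-α) / α)) < ⊤ := by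
        have heq : (∫⁻ x in Ioo (s i) (s (i + 1)), ENNReal.ofReal ((x - s i) ^ (-α) / α))
            = ∫⁻ t in Ioo (0:ℝ) (s (i + 1) - s i), ENNReal.ofReal (t ^ (-α) / α) := by
          have h1 := lint_shift (s i) (s i) (s (i + 1))
            (fun t => ENNReal.ofReal (t ^ (-α) / α))
          rwa [sub_self] at h1
        rw [heq]
        have heq2 : (∫⁻ t in Ioo (0:ℝ) (s (i + 1) - s i), ENNReal.ofReal (t ^ (-α) / α))
            = (∫⁻ t in Ioo (0:ℝ) (s (i + 1) - s i), ENNReal.ofReal (t ^ (-α)))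
              * ENNReal.ofReal α⁻¹ := by
          rw [← lintegral_mul_const' _ _ ENNReal.ofReal_ne_top]
          refine lintegral_congr fun t => ?_
          rw [div_eq_mul_inv, ENNReal.ofReal_mul' (inv_nonneg.mpr hα0.le)]
        rw [heq2]
        exact ENNReal.mul_lt_top (rpow_lint_finite _ (by linarith)) ENNReal.ofReal_lt_top
      calc (∫⁻ x in Ioo (s i) (s (i + 1)),
              ENNReal.ofReal (2 * M) * ENNReal.ofReal ((x - s i) ^ (-α) / α))
          = ENNReal.ofReal (2 * M)
            * ∫⁻ x in Ioo (s i) (s (i + 1)), ENNReal.ofReal ((x - s i) ^ (-α) / α) :=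
            lintegral_const_mul' _ _ ENNReal.ofReal_ne_top
        _ < ⊤ := ENNReal.mul_lt_top ENNReal.ofReal_lt_top hkey
    have hE3 : (∫⁻ _x in Ioo (s i) (s (i + 1)), ENNReal.ofReal (l i) * J) < ⊤ := by
      rw [setLIntegral_const]
      refine ENNReal.mul_lt_top (ENNReal.mul_lt_top ENNReal.ofReal_lt_top hJfin) ?_
      rw [Real.volume_Ioo]
      exact ENNReal.ofReal_lt_top
    calc (∫⁻ x in Ioo (s i) (s (i + 1)), F x)
        ≤ ∫⁻ x in Ioo (s i) (s (i + 1)),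
            (ENNReal.ofReal M * ENNReal.ofReal ((x - a) ^ (-α))
              + (ENNReal.ofReal (2 * M) * ENNReal.ofReal ((x - s i) ^ (-α) / α)
                 + ENNReal.ofReal (l i) * J)) :=
          setLIntegral_mono' measurableSet_Ioo hptwise
      _ = (∫⁻ x in Ioo (s i) (s (i + 1)), ENNReal.ofReal M * ENNReal.ofReal ((x - a) ^ (-α)))
          + ((∫⁻ x in Ioo (s i) (s (i + 1)),
                ENNReal.ofReal (2 * M) * ENNReal.ofReal ((x - s i) ^ (-α) / α))
             + ∫⁻ _x in Ioo (s i) (s (i + 1)), ENNReal.ofReal (l i) * J) := by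
          rw [lintegral_add_left hmeas1, lintegral_add_left hmeas2]
      _ < ⊤ := ENNReal.add_lt_top.mpr ⟨hE1, ENNReal.add_lt_top.mpr ⟨hE2, hE3⟩⟩
  refine lt_of_le_of_lt step1 ?_
  exact ENNReal.sum_lt_top.mpr fun i hi => piece i (Finset.mem_range.mp hi)
end

section
/- Let α ∈ (0,1) and 0 < u < t. Then ∫_0^u (u−s)^{−α} (t−s)^{−1−α} ds ≤ B(1−α, 2α) · (t−u)^{−2α}, where B denotes the Beta function. -/
open MeasureTheory Set
open scoped ENNReal

lemma aux_beta_integrable {a b : ℝ} (ha : 0 < a) (hb : 0 < b) :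
    IntegrableOn (fun x : ℝ => x ^ (a - 1) * (1 - x) ^ (b - 1)) (Ioo (0 : ℝ) 1) := by
  have hF : IntegrableOn (fun x : ℝ =>
      (x : ℂ) ^ ((a : ℂ) - 1) * (1 - (x : ℂ)) ^ ((b : ℂ) - 1)) (Ioo (0 : ℝ) 1) := by
    have := (Complex.betaIntegral_convergent (u := (a : ℂ)) (v := (b : ℂ))
      (by simpa using ha) (by simpa using hb))
    rw [intervalIntegrable_iff_integrableOn_Ioc_of_le (by norm_num)] at this
    exact this.mono_set Ioo_subset_Ioc_self
  have heq : ∀ x ∈ Ioo (0 : ℝ) 1,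
      ((x ^ (a - 1) * (1 - x) ^ (b - 1) : ℝ) : ℂ)
        = (x : ℂ) ^ ((a : ℂ) - 1) * (1 - (x : ℂ)) ^ ((b : ℂ) - 1) := by
    intro x hx
    push_cast
    rw [Complex.ofReal_cpow hx.1.le, Complex.ofReal_cpow (by linarith [hx.2])]
    push_cast
    ring
  have h2 : IntegrableOn (fun x : ℝ =>
      ((x ^ (a - 1) * (1 - x) ^ (b - 1) : ℝ) : ℂ)) (Ioo (0 : ℝ) 1) :=
    hF.congr_fun (fun x hx => (heq x hx).symm) measurableSet_Ioo
  simpa [IntegrableOn] using h2.re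

lemma aux_beta_value {a b : ℝ} (ha : 0 < a) (hb : 0 < b) :
    ∫ x in Ioo (0 : ℝ) 1, x ^ (a - 1) * (1 - x) ^ (b - 1)
      = Real.Gamma a * Real.Gamma b / Real.Gamma (a + b) := by
  have hGab : Complex.Gamma ((a : ℂ) + b) = ((Real.Gamma (a + b) : ℝ) : ℂ) := by
    rw [show ((a : ℂ) + b) = ((a + b : ℝ) : ℂ) by push_cast; ring, Complex.Gamma_ofReal]
  have habR : Real.Gamma (a + b) ≠ 0 := (Real.Gamma_pos_of_pos (by linarith)).ne'
  have hab : Complex.Gamma ((a : ℂ) + b) ≠ 0 := by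
    rw [hGab]; exact_mod_cast habR
  have hβ : Complex.betaIntegral a b
      = ((Real.Gamma a * Real.Gamma b / Real.Gamma (a + b) : ℝ) : ℂ) := by
    have h := Complex.Gamma_mul_Gamma_eq_betaIntegral (s := (a : ℂ)) (t := (b : ℂ))
      (by simpa using ha) (by simpa using hb)
    apply mul_right_cancel₀ hab
    rw [mul_comm, ← h, hGab, ← Complex.ofReal_mul, div_mul_cancel₀ _ habR,
      Complex.ofReal_mul, Complex.Gamma_ofReal, Complex.Gamma_ofReal]
  have heq : ∀ x ∈ Ioo (0 : ℝ) 1,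
      (x : ℂ) ^ ((a : ℂ) - 1) * (1 - (x : ℂ)) ^ ((b : ℂ) - 1)
        = ((x ^ (a - 1) * (1 - x) ^ (b - 1) : ℝ) : ℂ) := by
    intro x hx
    push_cast
    rw [Complex.ofReal_cpow hx.1.le, Complex.ofReal_cpow (by linarith [hx.2])]
    push_cast
    ring
  have h1 : Complex.betaIntegral a b
      = ((∫ x in Ioo (0 : ℝ) 1, x ^ (a - 1) * (1 - x) ^ (b - 1) : ℝ) : ℂ) := by
    rw [Complex.betaIntegral, intervalIntegral.integral_of_le (by norm_num : (0:ℝ) ≤ 1),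
      integral_Ioc_eq_integral_Ioo, setIntegral_congr_fun measurableSet_Ioo heq]
    exact integral_ofReal
  rw [hβ] at h1
  exact_mod_cast h1.symm

theorem integral_kernel_le_beta (α u t : ℝ) (hα : α ∈ Set.Ioo (0 : ℝ) 1)
    (hu : 0 < u) (hut : u < t) :
    (∫⁻ s in Ioo (0 : ℝ) u, ENNReal.ofReal ((u - s) ^ (-α) * (t - s) ^ (-1 - α))) ≤
      ENNReal.ofReal
        (Real.Gamma (1 - α) * Real.Gamma (2 * α) / Real.Gamma ((1 - α) + 2 * α) *
          (t - u) ^ (-(2 * α))) := by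
  obtain ⟨hα0, hα1⟩ := hα
  set c : ℝ := t - u with hc_def
  have hc : 0 < c := sub_pos.mpr hut
  set g : ℝ → ℝ≥0∞ := fun s => ENNReal.ofReal ((u - s) ^ (-α) * (t - s) ^ (-1 - α)) with hg
  set f : ℝ → ℝ := fun x => t - c / x with hf
  have hder : ∀ x ∈ Ioo (0 : ℝ) 1, HasDerivWithinAt f (c / x ^ 2) (Ioo (0 : ℝ) 1) x := by
    intro x hx
    have : HasDerivAt f (c / x ^ 2) x := by
      have h1 : HasDerivAt (fun x : ℝ => t - c * x⁻¹) (-(c * (-(x ^ 2)⁻¹))) x :=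
        ((hasDerivAt_inv hx.1.ne').const_mul c).const_sub t
      have : f = fun x : ℝ => t - c * x⁻¹ := by
        funext y; simp [hf, div_eq_mul_inv]
      rw [this]
      convert h1 using 1
      field_simp
    exact this.hasDerivWithinAt
  have hinj : InjOn f (Ioo (0 : ℝ) 1) := by
    intro x hx y hy hxy
    simp only [hf, sub_right_inj] at hxy
    rw [div_eq_div_iff hx.1.ne' hy.1.ne'] at hxy
    exact (mul_left_cancel₀ hc.ne' hxy).symm
  have himg : f '' Ioo (0 : ℝ) 1 = Iio u := by
    ext s
    constructor
    · rintro ⟨x, hx, rfl⟩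
      have : c < c / x := by
        rw [lt_div_iff₀ hx.1]
        nlinarith [hx.2]
      simp only [hf, mem_Iio]
      linarith
    · intro hs
      have hsu : s < u := mem_Iio.mp hs
      have hts : 0 < t - s := by linarith
      refine ⟨c / (t - s), ⟨by positivity, ?_⟩, ?_⟩
      · rw [div_lt_one hts]
        simp only [hc_def]; linarith
      · simp only [hf]
        rw [div_div_eq_mul_div, mul_comm, mul_div_assoc, div_self hc.ne', mul_one]
        ring
  have h2a : (0:ℝ) < 2 * α := by linarith
  have h1a : (0:ℝ) < 1 - α := by linarith
  have key := lintegral_image_eq_lintegral_abs_det_fderiv_mul volume measurableSet_Ioo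
    (f' := fun x : ℝ => (1 : ℝ →L[ℝ] ℝ).smulRight (c / x ^ 2))
    (fun x hx => (hder x hx).hasFDerivWithinAt) hinj g
  simp only [ContinuousLinearMap.det_smulRight, ContinuousLinearMap.one_apply, one_mul] at key
  have hcong : ∀ᵐ x ∂volume, x ∈ Ioo (0:ℝ) 1 →
      ENNReal.ofReal |c / x ^ 2| * g (f x)
        = ENNReal.ofReal (c ^ (-(2 * α)) * (x ^ (2 * α - 1) * (1 - x) ^ (-α))) := by
    refine ae_of_all _ (fun x hx => ?_)
    have hxp : (0:ℝ) < x := hx.1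
    have h1x : (0:ℝ) < 1 - x := by linarith [hx.2]
    have hfu : u - f x = c * (1 - x) / x := by
      simp only [hf, hc_def]
      field_simp
      ring
    have hft : t - f x = c / x := by simp [hf]
    have A : (c * (1 - x) / x) ^ (-α) = c ^ (-α) * (1 - x) ^ (-α) * x ^ α := by
      rw [show c * (1 - x) / x = c * (1 - x) * x⁻¹ from by ring,
        Real.mul_rpow (by positivity) (by positivity), Real.mul_rpow hc.le h1x.le,
        Real.inv_rpow hxp.le, Real.rpow_neg hxp.le, inv_inv]
    have B : (c / x) ^ (-1 - α) = c ^ (-1 - α) * x ^ (1 + α) := by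
      rw [div_eq_mul_inv, Real.mul_rpow hc.le (by positivity), Real.inv_rpow hxp.le,
        show (-1 - α : ℝ) = -(1 + α) from by ring, Real.rpow_neg hxp.le, inv_inv]
    have ec : c * (c ^ (-α) * c ^ (-1 - α)) = c ^ (-(2 * α)) := by
      rw [← Real.rpow_add hc, mul_comm, ← Real.rpow_add_one hc.ne']
      congr 1
      ring
    have ex : x ^ α * x ^ (1 + α) / x ^ 2 = x ^ (2 * α - 1) := by
      rw [← Real.rpow_add hxp, ← Real.rpow_natCast x 2, ← Real.rpow_sub hxp]
      congr 1
      push_cast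
      ring
    have e : |c / x ^ 2| * ((u - f x) ^ (-α) * (t - f x) ^ (-1 - α))
        = c ^ (-(2 * α)) * (x ^ (2 * α - 1) * (1 - x) ^ (-α)) := by
      rw [abs_of_pos (by positivity), hfu, hft, A, B, ← ec, ← ex]
      ring
    rw [hg]
    simp only
    rw [← ENNReal.ofReal_mul (abs_nonneg _), e]
  refine le_trans (lintegral_mono_set Ioo_subset_Iio_self) ?_
  rw [← himg, key, setLIntegral_congr_fun_ae measurableSet_Ioo hcong]
  simp_rw [ENNReal.ofReal_mul (Real.rpow_nonneg hc.le _)]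
  rw [lintegral_const_mul' _ _ ENNReal.ofReal_ne_top]
  have hint := aux_beta_integrable h2a h1a
  have hval := aux_beta_value h2a h1a
  have hexp : (1:ℝ) - α - 1 = -α := by ring
  simp only [hexp] at hint hval
  have hnn : 0 ≤ᵐ[volume.restrict (Ioo (0:ℝ) 1)]
      fun x : ℝ => x ^ (2 * α - 1) * (1 - x) ^ (-α) := by
    refine (ae_restrict_iff' measurableSet_Ioo).2 (ae_of_all _ fun x hx => ?_)
    exact mul_nonneg (Real.rpow_nonneg hx.1.le _)
      (Real.rpow_nonneg (by linarith [hx.2]) _)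
  rw [← ofReal_integral_eq_lintegral_ofReal hint hnn, hval,
    ← ENNReal.ofReal_mul (Real.rpow_nonneg hc.le _)]
  apply le_of_eq
  congr 1
  rw [show (2 * α + (1 - α) : ℝ) = (1 - α) + 2 * α from by ring]
  ring
end

section
/- Let α ∈ (0,1/2), β ∈ (α,1), t > 0, M > 0, and let c : [0,t] × ℝ → ℝ satisfy |c(s,x)| ≤ M(1+|x|) and |c(s,x) − c(u,y)| ≤ M(|s−u|^β + |x−y|) for all s,u ∈ [0,t], x,y ∈ ℝ. Let g : [0,t] → ℝ be continuous with Λ := ‖g‖_{0;[0,t]} < ∞, and let X : [0,t] → ℝ be measurable with ∫_0^t ( |X_s| s^{−α} + ‖X‖_s ) ds < ∞. Then the generalized Lebesgue–Stieltjes integral ∫_0^t c(s,X_s) dg(s) is well defined and there is a constant C, depending only on α, β, M and t, such that |∫_0^t c(s,X_s) dg(s)| ≤ C Λ ( 1 + ∫_0^t ( |X_s| s^{−α} + ‖X‖_s ) ds ). -/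
open MeasureTheory Set
open scoped ENNReal

/-- `‖X‖_s = ∫_0^s |X_s - X_u| (s-u)^{-1-α} du`, valued in `ℝ≥0∞`. -/
noncomputable def pathNorm (α : ℝ) (X : ℝ → ℝ) (s : ℝ) : ℝ≥0∞ :=
  ∫⁻ u in Ioo (0 : ℝ) s, ENNReal.ofReal (|X s - X u| * (s - u) ^ (-1 - α))


section AuxProof
open Filter Topology


variable {α t : ℝ}

lemma zeroNorm_entry_le {g : ℝ → ℝ} {u v : ℝ} (hu : 0 ≤ u) (huv : u < v) (hvt : v < t) :
    ENNReal.ofReal (|g v - g u| / (v - u) ^ (1 - α)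
      + ∫ z in Ioo u v, |g u - g z| / (z - u) ^ (2 - α)) ≤ zeroNorm α 0 t g :=
  le_iSup_of_le u (le_iSup_of_le v (le_iSup_of_le hu (le_iSup_of_le huv
    (le_iSup_of_le hvt le_rfl))))

lemma zeroNorm_entry_le_toReal {g : ℝ → ℝ} (hg : zeroNorm α 0 t g ≠ ⊤) {u v : ℝ}
    (hu : 0 ≤ u) (huv : u < v) (hvt : v < t) :
    |g v - g u| / (v - u) ^ (1 - α)
      + (∫ z in Ioo u v, |g u - g z| / (z - u) ^ (2 - α)) ≤ (zeroNorm α 0 t g).toReal :=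
  (ENNReal.ofReal_le_iff_le_toReal hg).1 (zeroNorm_entry_le hu huv hvt)

lemma holder_bound {g : ℝ → ℝ} (hg : zeroNorm α 0 t g ≠ ⊤) {u v : ℝ}
    (hu : 0 ≤ u) (huv : u < v) (hvt : v < t) :
    |g v - g u| ≤ (zeroNorm α 0 t g).toReal * (v - u) ^ (1 - α) := by
  have h1 : (0:ℝ) < (v - u) ^ (1 - α) := Real.rpow_pos_of_pos (by linarith) _
  have h2 : 0 ≤ ∫ z in Ioo u v, |g u - g z| / (z - u) ^ (2 - α) :=
    setIntegral_nonneg measurableSet_Ioo fun z hz =>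
      div_nonneg (abs_nonneg _) (Real.rpow_pos_of_pos (by linarith [hz.1]) _).le
  have h3 := zeroNorm_entry_le_toReal hg hu huv hvt
  have h4 : |g v - g u| / (v - u) ^ (1 - α) ≤ (zeroNorm α 0 t g).toReal := by linarith
  calc |g v - g u| = |g v - g u| / (v - u) ^ (1 - α) * (v - u) ^ (1 - α) := by
        field_simp
    _ ≤ (zeroNorm α 0 t g).toReal * (v - u) ^ (1 - α) := by
        exact mul_le_mul_of_nonneg_right h4 h1.le

lemma holder_bound_t {g : ℝ → ℝ} (hg : zeroNorm α 0 t g ≠ ⊤)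
    (hgc : ContinuousOn g (Icc 0 t)) {u : ℝ} (hu : 0 ≤ u) (hut : u < t) :
    |g t - g u| ≤ (zeroNorm α 0 t g).toReal * (t - u) ^ (1 - α) := by
  have hne : (𝓝[Ioo u t] t).NeBot := right_nhdsWithin_Ioo_neBot hut
  have hsub : Ioo u t ⊆ Icc 0 t := fun x hx => ⟨le_trans hu hx.1.le, hx.2.le⟩
  refine le_of_tendsto_of_tendsto (b := 𝓝[Ioo u t] t) (f := fun v => |g v - g u|)
    (g := fun v => (zeroNorm α 0 t g).toReal * (v - u) ^ (1 - α)) ?_ ?_ ?_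
  · have h1 : Tendsto g (𝓝[Ioo u t] t) (𝓝 (g t)) :=
      (hgc t (right_mem_Icc.2 (le_trans hu hut.le))).mono_left (nhdsWithin_mono _ hsub)
    exact ((continuous_abs.comp (continuous_id.sub continuous_const)).continuousAt.tendsto).comp h1
  · have hbase : ContinuousAt (fun v : ℝ => (v - u) ^ (1 - α)) t :=
      ContinuousAt.comp (f := fun v : ℝ => v - u) (x := t)
        (Real.continuousAt_rpow_const (t - u) (1 - α)
          (Or.inl (sub_ne_zero.2 hut.ne'))) (by fun_prop)
    have h2 : ContinuousAt (fun v : ℝ => (zeroNorm α 0 t g).toReal * (v - u) ^ (1 - α)) t :=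
      continuousAt_const.mul hbase
    exact h2.tendsto.mono_left nhdsWithin_le_nhds
  · exact Filter.eventually_of_mem self_mem_nhdsWithin
      (fun v hv => holder_bound hg hu hv.1 hv.2)


lemma fracDerivM_integral_bound {g : ℝ → ℝ} (hg : zeroNorm α 0 t g ≠ ⊤) {x : ℝ}
    (hx0 : 0 ≤ x) (hxt : x < t) :
    |∫ u in Ioo x t, (g x - g u) / (u - x) ^ (2 - α)| ≤ (zeroNorm α 0 t g).toReal := by
  set Λ := (zeroNorm α 0 t g).toReal with hΛdef
  have hΛ : 0 ≤ Λ := ENNReal.toReal_nonneg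
  set h : ℝ → ℝ := fun u => (g x - g u) / (u - x) ^ (2 - α) with hh
  by_cases hint : IntegrableOn h (Ioo x t)
  · have key : ∀ n : ℕ, ∫ u in Ioo x (t - (t - x) / (n + 1)), ‖h u‖ ≤ Λ := by
      intro n
      set v := t - (t - x) / (n + 1 : ℝ) with hvdef
      by_cases hxv : x < v
      · have hvt : v < t := by
          have : 0 < (t - x) / (n + 1 : ℝ) := div_pos (by linarith) (by positivity)
          rw [hvdef]; linarith
        have heq : ∫ u in Ioo x v, ‖h u‖ = ∫ z in Ioo x v, |g x - g z| / (z - x) ^ (2 - α) :=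
          setIntegral_congr_fun measurableSet_Ioo (fun z hz => by
            rw [Real.norm_eq_abs, hh, abs_div,
              abs_of_pos (Real.rpow_pos_of_pos (by linarith [hz.1]) _)])
        have h2 := zeroNorm_entry_le_toReal hg hx0 hxv hvt
        have h3 : 0 ≤ |g v - g x| / (v - x) ^ (1 - α) :=
          div_nonneg (abs_nonneg _) (Real.rpow_pos_of_pos (by linarith) _).le
        rw [heq]; rw [← hΛdef] at h2; linarith
      · rw [Ioo_eq_empty hxv]
        simpa using hΛ
    have hmono : Monotone (fun n : ℕ => Ioo x (t - (t - x) / (n + 1 : ℝ))) := by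
      intro m n hmn
      apply Ioo_subset_Ioo le_rfl
      have h1 : (0:ℝ) < m + 1 := by positivity
      have h2 : (m + 1 : ℝ) ≤ (n + 1 : ℝ) := by exact_mod_cast Nat.succ_le_succ hmn
      have := div_le_div_of_nonneg_left (by linarith : (0:ℝ) ≤ t - x) h1 h2
      linarith [div_le_div_of_nonneg_left (show (0:ℝ) ≤ t - x by linarith) h1 h2]
    have hunion : (⋃ n : ℕ, Ioo x (t - (t - x) / (n + 1 : ℝ))) = Ioo x t := by
      apply Subset.antisymm
      · refine iUnion_subset fun n => Ioo_subset_Ioo le_rfl ?_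
        have : 0 < (t - x) / (n + 1 : ℝ) := div_pos (by linarith) (by positivity)
        linarith
      · intro z hz
        obtain ⟨n, hn⟩ := exists_nat_gt ((t - x) / (t - z))
        have hz2 : 0 < t - z := by linarith [hz.2]
        refine mem_iUnion.2 ⟨n, hz.1, ?_⟩
        have hn1 : (t - x) / (t - z) < n + 1 := by linarith
        have : (t - x) / (n + 1 : ℝ) < t - z := by
          rw [div_lt_iff₀ (by positivity)]
          rw [div_lt_iff₀ hz2] at hn1
          linarith
        linarith
    have htend := tendsto_setIntegral_of_monotone (fun n : ℕ => measurableSet_Ioo) hmono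
      (hunion ▸ hint.norm)
    rw [hunion] at htend
    have hle : ∫ u in Ioo x t, ‖h u‖ ≤ Λ :=
      le_of_tendsto htend (Filter.Eventually.of_forall key)
    calc |∫ u in Ioo x t, h u| = ‖∫ u in Ioo x t, h u‖ := (Real.norm_eq_abs _).symm
      _ ≤ ∫ u in Ioo x t, ‖h u‖ := MeasureTheory.norm_integral_le_integral_norm _
      _ ≤ Λ := hle
  · rw [integral_undef hint]
    simpa using hΛ

lemma fracDerivM_bound (hα0 : 0 < α) (hα1 : α < 1) {g : ℝ → ℝ}
    (hg : zeroNorm α 0 t g ≠ ⊤) (hgc : ContinuousOn g (Icc 0 t)) {x : ℝ}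
    (hx : x ∈ Ioo 0 t) :
    |fracDerivM α t g x| ≤ 2 / Real.Gamma α * (zeroNorm α 0 t g).toReal := by
  set Λ := (zeroNorm α 0 t g).toReal with hΛdef
  have hΛ : 0 ≤ Λ := ENNReal.toReal_nonneg
  have hΓ : 0 < Real.Gamma α := Real.Gamma_pos_of_pos hα0
  have h1 : |(g x - g t) / (t - x) ^ (1 - α)| ≤ Λ := by
    have hpos : (0:ℝ) < (t - x) ^ (1 - α) := Real.rpow_pos_of_pos (by linarith [hx.2]) _
    rw [abs_div, abs_of_pos hpos, div_le_iff₀ hpos]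
    calc |g x - g t| = |g t - g x| := abs_sub_comm _ _
      _ ≤ Λ * (t - x) ^ (1 - α) := holder_bound_t hg hgc hx.1.le hx.2
  have h2 := fracDerivM_integral_bound hg (x := x) hx.1.le hx.2
  rw [← hΛdef] at h2
  have h3 : |(1 - α) * ∫ u in Ioo x t, (g x - g u) / (u - x) ^ (2 - α)| ≤ Λ := by
    rw [abs_mul, abs_of_pos (by linarith : (0:ℝ) < 1 - α)]
    calc (1 - α) * |∫ u in Ioo x t, (g x - g u) / (u - x) ^ (2 - α)|
        ≤ 1 * Λ := mul_le_mul (by linarith) h2 (abs_nonneg _) (by linarith)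
      _ = Λ := one_mul Λ
  rw [fracDerivM, abs_mul, abs_of_pos (by positivity : (0:ℝ) < 1 / Real.Gamma α)]
  calc 1 / Real.Gamma α * |(g x - g t) / (t - x) ^ (1 - α)
        + (1 - α) * ∫ u in Ioo x t, (g x - g u) / (u - x) ^ (2 - α)|
      ≤ 1 / Real.Gamma α * (Λ + Λ) := by
        apply mul_le_mul_of_nonneg_left _ (by positivity)
        calc |(g x - g t) / (t - x) ^ (1 - α)
              + (1 - α) * ∫ u in Ioo x t, (g x - g u) / (u - x) ^ (2 - α)|
            ≤ |(g x - g t) / (t - x) ^ (1 - α)|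
              + |(1 - α) * ∫ u in Ioo x t, (g x - g u) / (u - x) ^ (2 - α)| := abs_add_le _ _
          _ ≤ Λ + Λ := add_le_add h1 h3
    _ = 2 / Real.Gamma α * Λ := by ring


lemma measurable_setIntegral_Ioo (a b : ℝ → ℝ) (ha : Measurable a) (hb : Measurable b)
    (F : ℝ × ℝ → ℝ) (hF : Measurable F) :
    Measurable (fun x => ∫ u in Ioo (a x) (b x), F (x, u)) := by
  have h1 : ∀ x, (∫ u in Ioo (a x) (b x), F (x, u)) =
      ∫ u, ({p : ℝ × ℝ | a p.1 < p.2 ∧ p.2 < b p.1}.indicator F) (x, u) := by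
    intro x
    rw [← integral_indicator measurableSet_Ioo]
    refine integral_congr_ae (Filter.Eventually.of_forall fun u => ?_)
    by_cases hmem : u ∈ Ioo (a x) (b x)
    · rw [indicator_of_mem hmem]
      exact (indicator_of_mem (show (x,u) ∈ {p : ℝ × ℝ | a p.1 < p.2 ∧ p.2 < b p.1} from ⟨hmem.1, hmem.2⟩) F).symm
    · rw [indicator_of_notMem hmem]
      exact (indicator_of_notMem (fun hc => hmem ⟨hc.1, hc.2⟩) F).symm
  simp_rw [h1]
  have hset : MeasurableSet {p : ℝ × ℝ | a p.1 < p.2 ∧ p.2 < b p.1} :=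
    MeasurableSet.inter
      (measurableSet_lt (ha.comp measurable_fst) measurable_snd)
      (measurableSet_lt measurable_snd (hb.comp measurable_fst))
  exact ((hF.indicator hset).stronglyMeasurable.integral_prod_right').measurable

lemma measurable_pathNorm {X : ℝ → ℝ} (hX : Measurable X) :
    Measurable (fun s => pathNorm α X s) := by
  unfold pathNorm
  have h1 : ∀ s, (∫⁻ u in Ioo (0:ℝ) s, ENNReal.ofReal (|X s - X u| * (s - u) ^ (-1 - α))) =
      ∫⁻ u, ({p : ℝ × ℝ | 0 < p.2 ∧ p.2 < p.1}.indicator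
        (fun p => ENNReal.ofReal (|X p.1 - X p.2| * (p.1 - p.2) ^ (-1 - α)))) (s, u) := by
    intro s
    rw [← lintegral_indicator measurableSet_Ioo]
    refine lintegral_congr fun u => ?_
    by_cases hmem : u ∈ Ioo (0:ℝ) s
    · rw [indicator_of_mem hmem]
      exact (indicator_of_mem (show (s,u) ∈ {p : ℝ × ℝ | 0 < p.2 ∧ p.2 < p.1} from ⟨hmem.1, hmem.2⟩) (fun p : ℝ × ℝ => ENNReal.ofReal (|X p.1 - X p.2| * (p.1 - p.2) ^ (-1 - α)))).symm
    · rw [indicator_of_notMem hmem]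
      exact (indicator_of_notMem (fun hc => hmem ⟨hc.1, hc.2⟩) (fun p : ℝ × ℝ => ENNReal.ofReal (|X p.1 - X p.2| * (p.1 - p.2) ^ (-1 - α)))).symm
  simp_rw [h1]
  have hset : MeasurableSet {p : ℝ × ℝ | 0 < p.2 ∧ p.2 < p.1} :=
    MeasurableSet.inter
      (measurableSet_lt measurable_const measurable_snd)
      (measurableSet_lt measurable_snd measurable_fst)
  have hin : Measurable (fun p : ℝ × ℝ => ENNReal.ofReal (|X p.1 - X p.2| * (p.1 - p.2) ^ (-1 - α))) := by
    apply ENNReal.measurable_ofReal.comp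
    fun_prop
  exact Measurable.lintegral_prod_right' (hin.indicator hset)

lemma measurable_fracDerivP (f : ℝ → ℝ) (hf : Measurable f) :
    Measurable (fun x => fracDerivP α 0 f x) := by
  unfold fracDerivP
  apply Measurable.const_mul
  apply Measurable.add
  · fun_prop
  · apply Measurable.const_mul
    exact measurable_setIntegral_Ioo (fun _ => 0) (fun x => x) measurable_const measurable_id
      (fun p => (f p.1 - f p.2) / (p.1 - p.2) ^ (1 + α)) (by fun_prop)

lemma measurable_fracDerivM (g : ℝ → ℝ) (hg : Measurable g) :
    Measurable (fun x => fracDerivM α t g x) := by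
  unfold fracDerivM
  apply Measurable.const_mul
  apply Measurable.add
  · fun_prop
  · apply Measurable.const_mul
    exact measurable_setIntegral_Ioo (fun x => x) (fun _ => t) measurable_id measurable_const
      (fun p => (g p.1 - g p.2) / (p.2 - p.1) ^ (2 - α)) (by fun_prop)


lemma J_bound {β M : ℝ} (hα0 : 0 < α) (hαβ : α < β) (hβ1 : β < 1) (hM : 0 < M)
    {f X : ℝ → ℝ} (hX : Measurable X) {x : ℝ} (hx0 : 0 < x)
    (hfb : ∀ u, 0 < u → u < x → |f x - f u| ≤ M * ((x - u) ^ β + |X x - X u|))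
    (hpN : pathNorm α X x ≠ ⊤) :
    |∫ u in Ioo 0 x, (f x - f u) / (x - u) ^ (1 + α)|
      ≤ M * (x ^ (β - α) / (β - α)) + M * (pathNorm α X x).toReal := by
  have hβα : 0 < β - α := by linarith
  have hrhs : 0 ≤ M * (x ^ (β - α) / (β - α)) + M * (pathNorm α X x).toReal := by
    have := Real.rpow_nonneg hx0.le (β - α)
    have := ENNReal.toReal_nonneg (a := pathNorm α X x)
    positivity
  set h : ℝ → ℝ := fun u => (f x - f u) / (x - u) ^ (1 + α) with hh
  by_cases hint : IntegrableOn h (Ioo 0 x)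
  swap
  · rw [hh, integral_undef hint]; simpa using hrhs
  have hφ1 : IntegrableOn (fun u => (x - u) ^ (β - 1 - α)) (Ioo 0 x) := by
    have h1 : IntervalIntegrable (fun v : ℝ => v ^ (β - 1 - α)) volume 0 x :=
      intervalIntegral.intervalIntegrable_rpow' (by linarith)
    have h2 := (h1.comp_sub_left x).symm
    simp only [sub_zero, sub_self] at h2
    exact (intervalIntegrable_iff_integrableOn_Ioo_of_le hx0.le).1 h2
  have hB0 : ∀ᵐ u ∂(volume.restrict (Ioo (0:ℝ) x)),
      0 ≤ |X x - X u| * (x - u) ^ (-1 - α) := by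
    refine (ae_restrict_iff' measurableSet_Ioo).2 (Filter.Eventually.of_forall fun u hu => ?_)
    exact mul_nonneg (abs_nonneg _) (Real.rpow_pos_of_pos (by linarith [hu.2]) _).le
  have hBm : AEStronglyMeasurable (fun u => |X x - X u| * (x - u) ^ (-1 - α))
      (volume.restrict (Ioo (0:ℝ) x)) := by
    apply Measurable.aestronglyMeasurable; fun_prop
  have hφ2 : IntegrableOn (fun u => |X x - X u| * (x - u) ^ (-1 - α)) (Ioo 0 x) := by
    refine ⟨hBm, (hasFiniteIntegral_iff_ofReal hB0).2 ?_⟩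
    exact lt_top_iff_ne_top.2 hpN
  have hBint : (∫ u in Ioo 0 x, |X x - X u| * (x - u) ^ (-1 - α))
      = (pathNorm α X x).toReal := by
    rw [integral_eq_lintegral_of_nonneg_ae hB0 hBm]; rfl
  have hAint : (∫ u in Ioo 0 x, (x - u) ^ (β - 1 - α)) = x ^ (β - α) / (β - α) := by
    rw [← integral_Ioc_eq_integral_Ioo, ← intervalIntegral.integral_of_le hx0.le]
    have h3 := intervalIntegral.integral_comp_sub_left (a := 0) (b := x)
      (fun v : ℝ => v ^ (β - 1 - α)) x
    simp only [sub_zero, sub_self] at h3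
    rw [h3, integral_rpow (Or.inl (by linarith : (-1:ℝ) < β - 1 - α))]
    rw [Real.zero_rpow (by linarith : β - 1 - α + 1 ≠ 0)]
    ring_nf
  set φ : ℝ → ℝ := fun u => M * ((x - u) ^ (β - 1 - α) + |X x - X u| * (x - u) ^ (-1 - α))
    with hφdef
  have hφ : IntegrableOn φ (Ioo 0 x) := ((hφ1.add hφ2).const_mul M)
  have hmono : ∫ u in Ioo 0 x, ‖h u‖ ≤ ∫ u in Ioo 0 x, φ u := by
    refine setIntegral_mono_on hint.norm hφ measurableSet_Ioo fun u hu => ?_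
    have hpos : (0:ℝ) < x - u := by linarith [hu.2]
    have hxa : (0:ℝ) < (x - u) ^ (1 + α) := Real.rpow_pos_of_pos hpos _
    have e1 : (x - u) ^ β * (x - u) ^ (-1 - α) = (x - u) ^ (β - 1 - α) := by
      rw [← Real.rpow_add hpos]; ring_nf
    have e2 : ((x - u) ^ (1 + α))⁻¹ = (x - u) ^ (-1 - α) := by
      rw [← Real.rpow_neg hpos.le]; ring_nf
    have hb := hfb u hu.1 hu.2
    have hxneg : (0:ℝ) < (x - u) ^ (-1 - α) := Real.rpow_pos_of_pos hpos _
    calc ‖h u‖ = |f x - f u| * ((x - u) ^ (1 + α))⁻¹ := by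
          rw [hh, Real.norm_eq_abs, abs_div, abs_of_pos hxa, div_eq_mul_inv]
      _ = |f x - f u| * (x - u) ^ (-1 - α) := by rw [e2]
      _ ≤ M * ((x - u) ^ β + |X x - X u|) * (x - u) ^ (-1 - α) :=
          mul_le_mul_of_nonneg_right hb hxneg.le
      _ = φ u := by rw [hφdef]; simp only []; rw [← e1]; ring
  have hφint : ∫ u in Ioo 0 x, φ u
      = M * (x ^ (β - α) / (β - α)) + M * (pathNorm α X x).toReal := by
    calc ∫ u in Ioo 0 x, φ u
        = M * ∫ u in Ioo 0 x, ((x - u) ^ (β - 1 - α) + |X x - X u| * (x - u) ^ (-1 - α)) := by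
          rw [← integral_const_mul]
      _ = M * ((∫ u in Ioo 0 x, (x - u) ^ (β - 1 - α))
            + ∫ u in Ioo 0 x, |X x - X u| * (x - u) ^ (-1 - α)) := by
          rw [integral_add hφ1 hφ2]
      _ = M * (x ^ (β - α) / (β - α)) + M * (pathNorm α X x).toReal := by
          rw [hAint, hBint]; ring
  calc |∫ u in Ioo 0 x, h u| = ‖∫ u in Ioo 0 x, h u‖ := (Real.norm_eq_abs _).symm
    _ ≤ ∫ u in Ioo 0 x, ‖h u‖ := MeasureTheory.norm_integral_le_integral_norm _
    _ ≤ ∫ u in Ioo 0 x, φ u := hmono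
    _ = _ := hφint


lemma continuous_clamped {M β : ℝ} (ht : 0 < t) (hβ : 0 < β) (c : ℝ → ℝ → ℝ)
    (hc : ∀ s ∈ Icc (0:ℝ) t, ∀ u ∈ Icc (0:ℝ) t, ∀ x y : ℝ,
      |c s x - c u y| ≤ M * (|s - u| ^ β + |x - y|)) :
    Continuous (fun p : ℝ × ℝ => c (min (max p.1 0) t) p.2) := by
  have hclamp : Continuous (fun s : ℝ => min (max s 0) t) :=
    (continuous_id.max continuous_const).min continuous_const
  have hmem : ∀ s : ℝ, min (max s 0) t ∈ Icc (0:ℝ) t := fun s =>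
    ⟨le_min (le_max_right _ _) ht.le, min_le_right _ _⟩
  have hrpow : Continuous (fun y : ℝ => y ^ β) :=
    continuous_iff_continuousAt.2 fun y => Real.continuousAt_rpow_const y β (Or.inr hβ.le)
  refine continuous_iff_continuousAt.2 fun p₀ => ?_
  rw [ContinuousAt, tendsto_iff_dist_tendsto_zero]
  set g : ℝ × ℝ → ℝ := fun p =>
    M * (|min (max p.1 0) t - min (max p₀.1 0) t| ^ β + |p.2 - p₀.2|) with hgdef
  have hgc : Continuous g := by
    apply continuous_const.mul
    apply Continuous.add
    · exact hrpow.comp ((hclamp.comp continuous_fst).sub continuous_const).abs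
    · exact (continuous_snd.sub continuous_const).abs
  have hg0 : g p₀ = 0 := by
    simp [hgdef, Real.zero_rpow hβ.ne']
  refine squeeze_zero (fun p => dist_nonneg) (fun p => ?_) (hg0 ▸ hgc.tendsto p₀)
  rw [Real.dist_eq]
  exact hc _ (hmem p.1) _ (hmem p₀.1) p.2 p₀.2


end AuxProof

theorem gls_integral_coeff_bound (α β t M : ℝ)
    (hα : α ∈ Set.Ioo (0 : ℝ) (1 / 2)) (hβ : β ∈ Set.Ioo α 1)
    (ht : 0 < t) (hM : 0 < M) :
    ∃ C : ℝ, 0 < C ∧ ∀ (c : ℝ → ℝ → ℝ) (g X : ℝ → ℝ),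
      (∀ s ∈ Set.Icc 0 t, ∀ x : ℝ, |c s x| ≤ M * (1 + |x|)) →
      (∀ s ∈ Set.Icc 0 t, ∀ u ∈ Set.Icc 0 t, ∀ x y : ℝ,
        |c s x - c u y| ≤ M * (|s - u| ^ β + |x - y|)) →
      ContinuousOn g (Set.Icc 0 t) →
      zeroNorm α 0 t g < ⊤ →
      Measurable X →
      (∫⁻ s in Ioo (0 : ℝ) t,
          (ENNReal.ofReal (|X s| * s ^ (-α)) + pathNorm α X s)) < ⊤ →
      IntegrableOn
          (fun x => fracDerivP α 0 (fun s => c s (X s)) x * fracDerivM α t g x)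
          (Ioo 0 t) ∧
        |glsIntegral α 0 t (fun s => c s (X s)) g| ≤
          C * (zeroNorm α 0 t g).toReal *
            (1 + (∫⁻ s in Ioo (0 : ℝ) t,
              (ENNReal.ofReal (|X s| * s ^ (-α)) + pathNorm α X s)).toReal) := by
  obtain ⟨hα0, hα2⟩ := hα
  obtain ⟨hβα, hβ1⟩ := hβ
  have hα1 : α < 1 := by linarith
  have hβ0 : 0 < β := by linarith
  have hβα' : 0 < β - α := by linarith
  have hΓa : 0 < Real.Gamma α := Real.Gamma_pos_of_pos hα0
  have hΓa' : 0 < Real.Gamma (1 - α) := Real.Gamma_pos_of_pos (by linarith)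
  set Γa := Real.Gamma α
  set Γa' := Real.Gamma (1 - α)
  set c₁ := M / Γa' with hc₁
  set c₂ := α * M / ((β - α) * Γa') with hc₂
  set c₃ := α * M / Γa' with hc₃
  have hc₁0 : 0 < c₁ := by positivity
  have hc₂0 : 0 < c₂ := by positivity
  have hc₃0 : 0 < c₃ := by positivity
  have hI₁ : 0 < t ^ (1 - α) / (1 - α) :=
    div_pos (Real.rpow_pos_of_pos ht _) (by linarith)
  have hI₂ : 0 < t ^ (β - α) * t := mul_pos (Real.rpow_pos_of_pos ht _) ht
  set K₀ := c₁ * (t ^ (1 - α) / (1 - α)) + c₂ * (t ^ (β - α) * t) with hK₀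
  set K₁ := c₁ + c₃ with hK₁
  have hK₀0 : 0 < K₀ := add_pos (mul_pos hc₁0 hI₁) (mul_pos hc₂0 hI₂)
  have hK₁0 : 0 < K₁ := add_pos hc₁0 hc₃0
  refine ⟨2 / Γa * (K₀ + K₁), mul_pos (div_pos two_pos hΓa) (by linarith), ?_⟩
  intro c g X hcb hcl hgc hΛ hX hA
  have hΛne : zeroNorm α 0 t g ≠ ⊤ := hΛ.ne
  have hAne : (∫⁻ s in Ioo (0 : ℝ) t,
      (ENNReal.ofReal (|X s| * s ^ (-α)) + pathNorm α X s)) ≠ ⊤ := hA.ne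
  set Λ := (zeroNorm α 0 t g).toReal with hΛdef
  set A := (∫⁻ s in Ioo (0 : ℝ) t,
      (ENNReal.ofReal (|X s| * s ^ (-α)) + pathNorm α X s)).toReal with hAdef
  have hΛ0 : 0 ≤ Λ := ENNReal.toReal_nonneg
  have hA0 : 0 ≤ A := ENNReal.toReal_nonneg
  set B := 2 / Γa * Λ with hBdef
  have hB0 : 0 ≤ B := by positivity
  -- clamped versions
  set f : ℝ → ℝ := fun s => c s (X s) with hf
  set f' : ℝ → ℝ := fun s => c (min (max s 0) t) (X s) with hf'
  have hmemcl : ∀ s : ℝ, min (max s 0) t ∈ Icc (0:ℝ) t := fun s =>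
    ⟨le_min (le_max_right _ _) ht.le, min_le_right _ _⟩
  have hclamp_eq : ∀ s ∈ Icc (0:ℝ) t, min (max s 0) t = s := by
    intro s hs
    rw [max_eq_left hs.1, min_eq_left hs.2]
  have hf'meas : Measurable f' := by
    have hcont := continuous_clamped ht hβ0 c hcl
    exact hcont.measurable.comp (measurable_id.prodMk hX)
  have hff' : ∀ s ∈ Icc (0:ℝ) t, f s = f' s := by
    intro s hs
    simp only [hf, hf', hclamp_eq s hs]
  set g' : ℝ → ℝ := fun s => g (min (max s 0) t) with hg'
  have hg'cont : Continuous g' := by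
    apply hgc.comp_continuous
    · exact (continuous_id.max continuous_const).min continuous_const
    · exact hmemcl
  have hgg' : ∀ s ∈ Icc (0:ℝ) t, g s = g' s := by
    intro s hs
    simp only [hg', hclamp_eq s hs]
  -- P and Q
  set P : ℝ → ℝ := fun x => fracDerivP α 0 f x with hP
  set Q : ℝ → ℝ := fun x => fracDerivM α t g x with hQ
  have hIooIcc : Ioo (0:ℝ) t ⊆ Icc 0 t := Ioo_subset_Icc_self
  have hPP' : ∀ x ∈ Ioo (0:ℝ) t, P x = fracDerivP α 0 f' x := by
    intro x hx
    have h1 : f x = f' x := hff' x (hIooIcc hx)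
    have h2 : (∫ u in Ioo 0 x, (f x - f u) / (x - u) ^ (1 + α))
        = ∫ u in Ioo 0 x, (f' x - f' u) / (x - u) ^ (1 + α) :=
      setIntegral_congr_fun measurableSet_Ioo fun u hu => by
        simp only [h1, hff' u (hIooIcc ⟨hu.1, hu.2.trans hx.2⟩)]
    simp only [hP]
    unfold fracDerivP
    rw [h2, h1]
  have hQQ' : ∀ x ∈ Ioo (0:ℝ) t, Q x = fracDerivM α t g' x := by
    intro x hx
    have h1 : g x = g' x := hgg' x (hIooIcc hx)
    have h1t : g t = g' t := hgg' t (right_mem_Icc.2 ht.le)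
    have h2 : (∫ u in Ioo x t, (g x - g u) / (u - x) ^ (2 - α))
        = ∫ u in Ioo x t, (g' x - g' u) / (u - x) ^ (2 - α) :=
      setIntegral_congr_fun measurableSet_Ioo fun u hu => by
        simp only [h1, hgg' u (hIooIcc ⟨hx.1.trans hu.1, hu.2⟩)]
    simp only [hQ]
    unfold fracDerivM
    rw [h2, h1, h1t]
  have hP'meas : Measurable (fun x => fracDerivP α 0 f' x) := measurable_fracDerivP f' hf'meas
  have hQ'meas : Measurable (fun x => fracDerivM α t g' x) := measurable_fracDerivM g' hg'cont.measurable
  -- pathNorm facts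
  have hpNmeas : Measurable (fun s => pathNorm α X s) := measurable_pathNorm hX
  have hpNlt : (∫⁻ s in Ioo (0 : ℝ) t, pathNorm α X s) ≠ ⊤ := by
    refine ne_top_of_le_ne_top hAne (lintegral_mono fun s => ?_)
    exact le_add_self
  have hae : ∀ᵐ x ∂(volume.restrict (Ioo (0:ℝ) t)), pathNorm α X x ≠ ⊤ := by
    filter_upwards [ae_lt_top hpNmeas hpNlt] with x hx
    exact hx.ne
  -- Q bound
  have hQbd : ∀ x ∈ Ioo (0:ℝ) t, |Q x| ≤ B :=
    fun x hx => fracDerivM_bound hα0 hα1 hΛne hgc hx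
  -- φ and the P bound
  set φ : ℝ → ℝ := fun x => c₁ * x ^ (-α) + c₁ * (|X x| * x ^ (-α))
      + c₂ * x ^ (β - α) + c₃ * (pathNorm α X x).toReal with hφdef
  have hPφ : ∀ᵐ x ∂(volume.restrict (Ioo (0:ℝ) t)), |P x| ≤ φ x := by
    filter_upwards [hae, self_mem_ae_restrict measurableSet_Ioo] with x hpn hx
    have hx0 : 0 < x := hx.1
    have hxα : (0:ℝ) < x ^ α := Real.rpow_pos_of_pos hx0 _
    have hxnegα : x ^ (-α) = (x ^ α)⁻¹ := Real.rpow_neg hx0.le α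
    have hfb : ∀ u, 0 < u → u < x → |f x - f u| ≤ M * ((x - u) ^ β + |X x - X u|) := by
      intro u hu0 hux
      have h1 := hcl x (hIooIcc hx) u (hIooIcc ⟨hu0, hux.trans hx.2⟩) (X x) (X u)
      rwa [abs_of_pos (by linarith : (0:ℝ) < x - u)] at h1
    have hJ := J_bound hα0 hβα hβ1 hM hX hx0 hfb hpn
    have hfx : |f x| ≤ M * (1 + |X x|) := hcb x (hIooIcc hx) (X x)
    have hstep : |P x| ≤ (1/Γa') * (M * (1 + |X x|) * x ^ (-α)
        + α * (M * (x ^ (β - α) / (β - α)) + M * (pathNorm α X x).toReal)) := by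
      simp only [hP]
      unfold fracDerivP
      rw [sub_zero, abs_mul, abs_of_pos (by positivity : (0:ℝ) < 1/Γa')]
      apply mul_le_mul_of_nonneg_left _ (by positivity)
      calc |f x / x ^ α + α * ∫ u in Ioo 0 x, (f x - f u) / (x - u) ^ (1 + α)|
          ≤ |f x / x ^ α| + |α * ∫ u in Ioo 0 x, (f x - f u) / (x - u) ^ (1 + α)| := abs_add_le _ _
        _ ≤ M * (1 + |X x|) * x ^ (-α)
            + α * (M * (x ^ (β - α) / (β - α)) + M * (pathNorm α X x).toReal) := by
            apply add_le_add
            · rw [abs_div, abs_of_pos hxα, div_eq_mul_inv, ← hxnegα]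
              exact mul_le_mul_of_nonneg_right hfx (Real.rpow_pos_of_pos hx0 _).le
            · rw [abs_mul, abs_of_pos hα0]
              exact mul_le_mul_of_nonneg_left hJ hα0.le
    refine hstep.trans (le_of_eq ?_)
    rw [hφdef]
    simp only [hc₁, hc₂, hc₃]
    field_simp
    ring
  -- integrability of φ
  have hi1 : IntegrableOn (fun x : ℝ => x ^ (-α)) (Ioo 0 t) := by
    exact (intervalIntegrable_iff_integrableOn_Ioo_of_le ht.le).1
      (intervalIntegral.intervalIntegrable_rpow' (by linarith))
  have hi3 : IntegrableOn (fun x : ℝ => x ^ (β - α)) (Ioo 0 t) := by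
    exact (intervalIntegrable_iff_integrableOn_Ioo_of_le ht.le).1
      (intervalIntegral.intervalIntegrable_rpow' (by linarith))
  have hX0 : ∀ᵐ x ∂(volume.restrict (Ioo (0:ℝ) t)), 0 ≤ |X x| * x ^ (-α) := by
    refine (ae_restrict_iff' measurableSet_Ioo).2 (Filter.Eventually.of_forall fun x hx => ?_)
    exact mul_nonneg (abs_nonneg _) (Real.rpow_pos_of_pos hx.1 _).le
  have hXm : AEStronglyMeasurable (fun x => |X x| * x ^ (-α))
      (volume.restrict (Ioo (0:ℝ) t)) := by
    apply Measurable.aestronglyMeasurable; fun_prop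
  have hXlt : (∫⁻ s in Ioo (0 : ℝ) t, ENNReal.ofReal (|X s| * s ^ (-α))) ≠ ⊤ := by
    refine ne_top_of_le_ne_top hAne (lintegral_mono fun s => ?_)
    exact le_self_add
  have hi2 : IntegrableOn (fun x => |X x| * x ^ (-α)) (Ioo 0 t) :=
    ⟨hXm, (hasFiniteIntegral_iff_ofReal hX0).2 (lt_top_iff_ne_top.2 hXlt)⟩
  have hi4 : IntegrableOn (fun x => (pathNorm α X x).toReal) (Ioo 0 t) :=
    integrable_toReal_of_lintegral_ne_top hpNmeas.aemeasurable hpNlt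
  have hφint : IntegrableOn φ (Ioo 0 t) := by
    apply Integrable.add
    apply Integrable.add
    apply Integrable.add
    · exact hi1.const_mul _
    · exact hi2.const_mul _
    · exact hi3.const_mul _
    · exact hi4.const_mul _
  -- integrability of P * Q
  have heqPQ : (fun x => fracDerivP α 0 f' x * fracDerivM α t g' x)
      =ᵐ[volume.restrict (Ioo (0:ℝ) t)] (fun x => P x * Q x) := by
    filter_upwards [self_mem_ae_restrict measurableSet_Ioo] with x hx
    rw [hPP' x hx, hQQ' x hx]
  have hPQmeas : AEStronglyMeasurable (fun x => P x * Q x)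
      (volume.restrict (Ioo (0:ℝ) t)) :=
    ((hP'meas.mul hQ'meas).aestronglyMeasurable).congr heqPQ
  have hPQbd : ∀ᵐ x ∂(volume.restrict (Ioo (0:ℝ) t)), ‖P x * Q x‖ ≤ φ x * B := by
    filter_upwards [hPφ, self_mem_ae_restrict measurableSet_Ioo] with x hp hx
    rw [Real.norm_eq_abs, abs_mul]
    exact mul_le_mul hp (hQbd x hx) (abs_nonneg _) ((abs_nonneg _).trans hp)
  have hPQint : IntegrableOn (fun x => P x * Q x) (Ioo 0 t) :=
    Integrable.mono' (hφint.mul_const B) hPQmeas hPQbd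
  refine ⟨hPQint, ?_⟩
  -- the integral bounds for φ
  have hb1 : (∫ x in Ioo (0:ℝ) t, x ^ (-α)) = t ^ (1 - α) / (1 - α) := by
    rw [← integral_Ioc_eq_integral_Ioo, ← intervalIntegral.integral_of_le ht.le,
      integral_rpow (Or.inl (by linarith : (-1:ℝ) < -α)),
      Real.zero_rpow (by linarith : -α + 1 ≠ 0)]
    norm_num
    rw [show -α + 1 = 1 - α by ring]
  have hb2 : (∫ x in Ioo (0:ℝ) t, |X x| * x ^ (-α)) ≤ A := by
    rw [integral_eq_lintegral_of_nonneg_ae hX0 hXm]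
    exact ENNReal.toReal_mono hAne (lintegral_mono fun s => le_self_add)
  have hb3 : (∫ x in Ioo (0:ℝ) t, x ^ (β - α)) ≤ t ^ (β - α) * t := by
    have h1 : (∫ x in Ioo (0:ℝ) t, x ^ (β - α)) ≤ ∫ _x in Ioo (0:ℝ) t, t ^ (β - α) := by
      refine setIntegral_mono_on hi3 (integrableOn_const (by
        rw [Real.volume_Ioo]; exact ENNReal.ofReal_ne_top)) measurableSet_Ioo fun x hx => ?_
      exact Real.rpow_le_rpow hx.1.le hx.2.le hβα'.le
    refine h1.trans (le_of_eq ?_)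
    rw [setIntegral_const, Real.volume_real_Ioo, smul_eq_mul, sub_zero,
      max_eq_left ht.le]
    ring
  have hb4 : (∫ x in Ioo (0:ℝ) t, (pathNorm α X x).toReal) ≤ A := by
    rw [integral_toReal (hpNmeas.aemeasurable.restrict) (ae_lt_top hpNmeas hpNlt)]
    exact ENNReal.toReal_mono hAne (lintegral_mono fun s => le_add_self)
  have hφle : (∫ x in Ioo (0:ℝ) t, φ x) ≤ K₀ + K₁ * A := by
    have hiA : IntegrableOn (fun x : ℝ => c₁ * x ^ (-α)) (Ioo 0 t) := hi1.const_mul c₁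
    have hiB : IntegrableOn (fun x : ℝ => c₁ * (|X x| * x ^ (-α))) (Ioo 0 t) :=
      hi2.const_mul c₁
    have hiC : IntegrableOn (fun x : ℝ => c₂ * x ^ (β - α)) (Ioo 0 t) := hi3.const_mul c₂
    have hiD : IntegrableOn (fun x : ℝ => c₃ * (pathNorm α X x).toReal) (Ioo 0 t) :=
      hi4.const_mul c₃
    have hsplit : (∫ x in Ioo (0:ℝ) t, φ x)
        = c₁ * (∫ x in Ioo (0:ℝ) t, x ^ (-α))
          + c₁ * (∫ x in Ioo (0:ℝ) t, |X x| * x ^ (-α))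
          + c₂ * (∫ x in Ioo (0:ℝ) t, x ^ (β - α))
          + c₃ * (∫ x in Ioo (0:ℝ) t, (pathNorm α X x).toReal) := by
      have s1 : (∫ x in Ioo (0:ℝ) t, φ x)
          = (∫ x in Ioo (0:ℝ) t, (c₁ * x ^ (-α) + c₁ * (|X x| * x ^ (-α)) + c₂ * x ^ (β - α)))
            + ∫ x in Ioo (0:ℝ) t, c₃ * (pathNorm α X x).toReal :=
        integral_add ((hiA.add hiB).add hiC) hiD
      have s2 : (∫ x in Ioo (0:ℝ) t, (c₁ * x ^ (-α) + c₁ * (|X x| * x ^ (-α)) + c₂ * x ^ (β - α)))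
          = (∫ x in Ioo (0:ℝ) t, (c₁ * x ^ (-α) + c₁ * (|X x| * x ^ (-α))))
            + ∫ x in Ioo (0:ℝ) t, c₂ * x ^ (β - α) :=
        integral_add (hiA.add hiB) hiC
      have s3 : (∫ x in Ioo (0:ℝ) t, (c₁ * x ^ (-α) + c₁ * (|X x| * x ^ (-α))))
          = (∫ x in Ioo (0:ℝ) t, c₁ * x ^ (-α))
            + ∫ x in Ioo (0:ℝ) t, c₁ * (|X x| * x ^ (-α)) :=
        integral_add hiA hiB
      have s4 : (∫ x in Ioo (0:ℝ) t, c₁ * x ^ (-α)) = c₁ * ∫ x in Ioo (0:ℝ) t, x ^ (-α) :=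
        integral_const_mul c₁ _
      have s5 : (∫ x in Ioo (0:ℝ) t, c₁ * (|X x| * x ^ (-α)))
          = c₁ * ∫ x in Ioo (0:ℝ) t, |X x| * x ^ (-α) := integral_const_mul c₁ _
      have s6 : (∫ x in Ioo (0:ℝ) t, c₂ * x ^ (β - α)) = c₂ * ∫ x in Ioo (0:ℝ) t, x ^ (β - α) :=
        integral_const_mul c₂ _
      have s7 : (∫ x in Ioo (0:ℝ) t, c₃ * (pathNorm α X x).toReal)
          = c₃ * ∫ x in Ioo (0:ℝ) t, (pathNorm α X x).toReal := integral_const_mul c₃ _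
      rw [s1, s2, s3, s4, s5, s6, s7]
    rw [hsplit, hb1, hK₀, hK₁]
    have h2 := mul_le_mul_of_nonneg_left hb2 hc₁0.le
    have h3 := mul_le_mul_of_nonneg_left hb3 hc₂0.le
    have h4 := mul_le_mul_of_nonneg_left hb4 hc₃0.le
    linarith
  -- final bound
  have hφ0 : 0 ≤ ∫ x in Ioo (0:ℝ) t, φ x := by
    have : ∀ᵐ x ∂(volume.restrict (Ioo (0:ℝ) t)), 0 ≤ φ x := by
      filter_upwards [hPφ] with x hx
      exact (abs_nonneg _).trans hx
    exact integral_nonneg_of_ae this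
  calc |glsIntegral α 0 t f g| = ‖∫ x in Ioo (0:ℝ) t, P x * Q x‖ := by
        rw [Real.norm_eq_abs]; rfl
    _ ≤ ∫ x in Ioo (0:ℝ) t, ‖P x * Q x‖ := MeasureTheory.norm_integral_le_integral_norm _
    _ ≤ ∫ x in Ioo (0:ℝ) t, φ x * B := by
        refine integral_mono_ae hPQint.norm (hφint.mul_const B) hPQbd
    _ = (∫ x in Ioo (0:ℝ) t, φ x) * B := by rw [integral_mul_const]
    _ ≤ (K₀ + K₁ * A) * B := mul_le_mul_of_nonneg_right hφle hB0
    _ ≤ ((K₀ + K₁) * (1 + A)) * B := by nlinarith [mul_nonneg (mul_nonneg hK₀0.le hA0) hB0, mul_nonneg hK₁0.le hB0]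
    _ = 2 / Γa * (K₀ + K₁) * Λ * (1 + A) := by rw [hBdef]; ring
end
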